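/- For each • ∈ {A, D}: (a) for every i ∈ Σ_{n+1} and every 0 ≤ s ≤ N, the word E_•(s)(i) is a reduced word in Σ_{n+2} with C_•(E_•(s)(i)) = i (up to 2-move equivalence) and ind_•(E_•(s)(i)) = s; (b) for every i ∈ Σ_{n+2}, the word E_•(ind_•(i))(C_•(i)) is 2-move equivalent to i. In particular the map i ↦ (C_•(i), ind_•(i)) from Σ_{n+2} to Σ_{n+1} × {0,…,N} is surjective, E_• is a section of it, and the composition of E_• with the quotient map to 2-move equivalence classes of Σ_{n+2} is surjective. -/

import Mathlib

open scoped Classical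

noncomputable section

namespace StringPolytope

/-! ### Words, reduced words, two-moves -/

/-- the simple transposition `s_a = (a, a+1)` acting on `ℕ` (wires are `1, …, n+1`). -/
def sTrans (a : ℕ) : Equiv.Perm ℕ := Equiv.swap a (a + 1)

/-- product `s_{i₁} ⋯ s_{i_N}` of the simple transpositions of a word. -/
def wordProd (w : List ℕ) : Equiv.Perm ℕ := (w.map sTrans).prod

/-- the longest element `w₀` of the symmetric group on `{1, …, n+1}`,
sending `k ↦ n + 2 - k` there and fixing everything else. -/
def longestPerm (n : ℕ) : Equiv.Perm ℕ :=
  Function.Involutive.toPerm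
    (fun k => if 1 ≤ k ∧ k ≤ n + 1 then n + 2 - k else k)
    (by intro k; dsimp only; split_ifs <;> omega)

/-- `w ∈ Σ_{n+1}`: a reduced word of the longest element of `S_{n+1}`,
i.e. a word over `[n] = {1,…,n}` of length `N = n(n+1)/2` whose product is `w₀`. -/
def IsReduced (n : ℕ) (w : List ℕ) : Prop :=
  w.length = n * (n + 1) / 2 ∧ (∀ a ∈ w, 1 ≤ a ∧ a ≤ n) ∧ wordProd w = longestPerm n

/-- a single 2-move: exchange two adjacent letters `(a, b)` with `|a - b| > 1`. -/
def TwoMoveStep (w w' : List ℕ) : Prop :=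
  ∃ u v a b, (a + 1 < b ∨ b + 1 < a) ∧ w = u ++ a :: b :: v ∧ w' = u ++ b :: a :: v

/-- 2-move equivalence of words. -/
def TwoMoveEquiv : List ℕ → List ℕ → Prop := Relation.ReflTransGen TwoMoveStep

/-- `A_n = (1, 2, …, n)`. -/
def ascWord (n : ℕ) : List ℕ := (List.range n).map (· + 1)

/-- `D_n = (n, n-1, …, 1)`. -/
def descWord (n : ℕ) : List ℕ := (ascWord n).reverse

/-! ### The wiring diagram -/

/-- the letter `i_j` of `w` (1-based index `j`); the node `t_j` lies in column `i_j`. -/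
def letterAt (w : List ℕ) (j : ℕ) : ℕ := w.getD (j - 1) 0

/-- `1 ≤ j ≤ N`: `t_j` is an actual node of the diagram. -/
def ValidNode (w : List ℕ) (j : ℕ) : Prop := 1 ≤ j ∧ j ≤ w.length

/-- the column-to-wire assignment just above node `t_j`
(at the top of the diagram, wire `k` is in column `k`). -/
def stateAbove (w : List ℕ) (j : ℕ) : Equiv.Perm ℕ := wordProd (w.take (j - 1))

/-- the column-to-wire assignment just below node `t_j`. -/
def stateBelow (w : List ℕ) (j : ℕ) : Equiv.Perm ℕ := wordProd (w.take j)

/-- one of the two wires crossing at node `t_j` (the one leaving upward-left). -/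
def wireX (w : List ℕ) (j : ℕ) : ℕ := stateAbove w j (letterAt w j)

/-- the other wire crossing at node `t_j` (the one leaving upward-right). -/
def wireY (w : List ℕ) (j : ℕ) : ℕ := stateAbove w j (letterAt w j + 1)

/-- the node `t_j` lies on the wire `ℓ_r`. -/
def NodeOnWire (w : List ℕ) (j r : ℕ) : Prop := wireX w j = r ∨ wireY w j = r

/-- given one wire `r` at node `t_j`, the other wire crossing there. -/
def otherWire (w : List ℕ) (j r : ℕ) : ℕ := if wireX w j = r then wireY w j else wireX w j

/-- the column of wire `ℓ_r` at the height of node `t_j`. -/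
def wireCol (w : List ℕ) (j r : ℕ) : ℕ := (stateBelow w j).symm r

/-- node `t_j` lies strictly below the wire `ℓ_{n+1}`
(which runs from the bottom-left corner to the top-right corner). -/
def BelowWireLast (n : ℕ) (w : List ℕ) (j : ℕ) : Prop :=
  wireCol w j (n + 1) < letterAt w j

/-- node `t_j` lies strictly above the wire `ℓ_{n+1}`. -/
def AboveWireLast (n : ℕ) (w : List ℕ) (j : ℕ) : Prop :=
  letterAt w j + 1 < wireCol w j (n + 1)

/-- node `t_j` lies strictly below the wire `ℓ_1`
(which runs from the bottom-right corner to the top-left corner). -/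
def BelowWireOne (w : List ℕ) (j : ℕ) : Prop :=
  letterAt w j + 1 < wireCol w j 1

/-- node `t_j` lies strictly above the wire `ℓ_1`. -/
def AboveWireOne (w : List ℕ) (j : ℕ) : Prop :=
  wireCol w j 1 < letterAt w j

/-! ### Rigorous (Gleizer–Postnikov) paths

A path in `G(i, k)` is encoded by `k` together with the list of its switching
nodes, in order of travel.  Wires `ℓ_1, …, ℓ_k` are oriented upward
(decreasing node index) and the remaining wires downward. -/

/-- the (1-based indices of the) nodes lying on wire `ℓ_r`, in order of increasing index. -/
def nodesOn (w : List ℕ) (r : ℕ) : List ℕ :=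
  ((List.range w.length).map (· + 1)).filter (fun j => decide (NodeOnWire w j r))

/-- nodes on wire `ℓ_r` strictly between the nodes `t_a` and `t_b`. -/
def segList (w : List ℕ) (r a b : ℕ) : List ℕ :=
  (nodesOn w r).filter (fun j => decide (min a b < j ∧ j < max a b))

/-- nodes on wire `ℓ_r` strictly below the node `t_a`. -/
def tailList (w : List ℕ) (r a : ℕ) : List ℕ :=
  (nodesOn w r).filter (fun j => decide (a < j))

/-- a forbidden fragment of `G(i, k)`: the path passes straight through node `t_j`
travelling along the wire `ℓ_r`, where the other wire `ℓ_b` crossing there has the same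
orientation as `ℓ_r` and (`r < b` if both upward, `r > b` if both downward). -/
def Forbidden (w : List ℕ) (k j r : ℕ) : Prop :=
  (r ≤ k ∧ otherWire w j r ≤ k ∧ r < otherWire w j r) ∨
  (k < r ∧ k < otherWire w j r ∧ otherWire w j r < r)

/-- travelling in `G(i,k)`: currently on wire `ℓ_r` at node `t_a` (just switched there),
with future switching nodes `ms`; the travel is legal and ends at `L_{k+1}`. -/
def TravelOK (w : List ℕ) (k : ℕ) : ℕ → ℕ → List ℕ → Prop
  | r, a, [] => r = k + 1 ∧ ∀ j ∈ tailList w r a, ¬ Forbidden w k j r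
  | r, a, m :: ms =>
      ValidNode w m ∧ NodeOnWire w m r ∧
      (if r ≤ k then m < a else a < m) ∧
      (∀ j ∈ segList w r a m, ¬ Forbidden w k j r) ∧
      TravelOK w k (otherWire w m r) m ms

/-- all nodes visited after the switch at node `t_a` onto wire `ℓ_r`. -/
def visitTail (w : List ℕ) : ℕ → ℕ → List ℕ → List ℕ
  | r, a, [] => tailList w r a
  | r, a, m :: ms => segList w r a m ++ m :: visitTail w (otherWire w m r) m ms

/-- the list of all nodes visited by the path (switching nodes and straight passes). -/
def visitList (w : List ℕ) (k : ℕ) : List ℕ → List ℕ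
  | [] => []
  | m :: ms => tailList w k m ++ m :: visitTail w (otherWire w m k) m ms

/-- `(k, ms)` encodes a rigorous (Gleizer–Postnikov) path in `G(i, k)`:
it starts at `L_k` going up the wire `ℓ_k`, switches wires exactly at the nodes
listed in `ms`, respects the orientation, ends at `L_{k+1}`, contains no forbidden
fragment and passes through each node at most once. -/
def IsGPPath (n : ℕ) (w : List ℕ) (k : ℕ) (ms : List ℕ) : Prop :=
  1 ≤ k ∧ k ≤ n ∧
  (match ms with
   | [] => False
   | m :: rest =>
       ValidNode w m ∧ NodeOnWire w m k ∧
       (∀ j ∈ tailList w k m, ¬ Forbidden w k j k) ∧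
       TravelOK w k (otherWire w m k) m rest) ∧
  (visitList w k ms).Nodup

/-- the set `GP(i)` of all rigorous paths of `G(i)`. -/
def GP (n : ℕ) (w : List ℕ) : Set (ℕ × List ℕ) := {p | IsGPPath n w p.1 p.2}

/-- `|GP(i)|`, the number of rigorous paths. -/
def numGP (n : ℕ) (w : List ℕ) : ℕ := (GP n w).ncard

/-- the successive switches of a path: `(node, from-wire, to-wire)`. -/
def pathSwitches (w : List ℕ) : ℕ → List ℕ → List (ℕ × ℕ × ℕ)
  | _, [] => []
  | r, m :: ms => (m, r, otherWire w m r) :: pathSwitches w (otherWire w m r) ms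

/-- the wire-expression of a path: the successive wires travelled. -/
def wireSeq (w : List ℕ) : ℕ → List ℕ → List ℕ
  | r, [] => [r]
  | r, m :: ms => r :: wireSeq w (otherWire w m r) ms

/-- the peaks of a path: switching nodes where the path switches from an
upward wire to a downward wire. -/
def peaks (w : List ℕ) (k : ℕ) (ms : List ℕ) : List ℕ :=
  ((pathSwitches w k ms).filter (fun e => decide (e.2.1 ≤ k ∧ k < e.2.2))).map (·.1)

/-! ### String cone, `λ`-cone, string polytope -/

/-- `N = n(n+1)/2`, the number of nodes. -/
abbrev Dim (n : ℕ) : ℕ := n * (n + 1) / 2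

/-- the coefficient `a_j` of `t_j` in the string inequality of the path `(k, ms)`:
`+1` if the path switches at `t_j` from `ℓ_r` to `ℓ_s` with `r < s`,
`-1` if it switches with `r > s`, and `0` otherwise. -/
def coeff (w : List ℕ) (k : ℕ) (ms : List ℕ) (j : ℕ) : ℝ :=
  ((pathSwitches w k ms).map (fun e =>
    if e.1 = j then (if e.2.1 < e.2.2 then (1 : ℝ) else -1) else 0)).sum

/-- the (primitive inward normal) coefficient vector of the string inequality of a path. -/
def normalVec (n : ℕ) (w : List ℕ) (p : ℕ × List ℕ) : Fin (Dim n) → ℝ :=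
  fun j => coeff w p.1 p.2 ((j : ℕ) + 1)

/-- the left-hand side `∑ a_j t_j` of the string inequality of the path `p`. -/
def stringIneq (n : ℕ) (w : List ℕ) (p : ℕ × List ℕ) (t : Fin (Dim n) → ℝ) : ℝ :=
  ∑ j : Fin (Dim n), normalVec n w p j * t j

/-- the string cone `C_i ⊆ ℝ^N`. -/
def stringCone (n : ℕ) (w : List ℕ) : Set (Fin (Dim n) → ℝ) :=
  {t | ∀ p ∈ GP n w, 0 ≤ stringIneq n w p t}

/-- the polyhedron cut out by all string inequalities except the one of `p₀`. -/
def stringConeExcept (n : ℕ) (w : List ℕ) (p₀ : ℕ × List ℕ) : Set (Fin (Dim n) → ℝ) :=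
  {t | ∀ p ∈ GP n w, p ≠ p₀ → 0 ≤ stringIneq n w p t}

/-- the coefficient `a_k` in the `λ`-inequality of node `t_j`:
`1` if `t_k` is one column left or right of `t_j`, `-2` if in the same column. -/
def lamCoeff (w : List ℕ) (j k : ℕ) : ℝ :=
  if letterAt w k = letterAt w j then -2
  else if letterAt w k = letterAt w j + 1 ∨ letterAt w k + 1 = letterAt w j then 1
  else 0

/-- the `λ`-inequality of node `t_{j+1}`:
`t_j ≤ λ_{i_j} + ∑_{k > j} a_k t_k`. -/
def LamIneq (n : ℕ) (w : List ℕ) (lam : ℕ → ℤ) (j : Fin (Dim n)) (t : Fin (Dim n) → ℝ) : Prop :=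
  t j ≤ (lam (letterAt w ((j : ℕ) + 1)) : ℝ) +
    ∑ k : Fin (Dim n),
      (if (j : ℕ) < (k : ℕ) then lamCoeff w ((j : ℕ) + 1) ((k : ℕ) + 1) else 0) * t k

/-- the `λ`-cone `C_i^λ ⊆ ℝ^N`. -/
def lamCone (n : ℕ) (w : List ℕ) (lam : ℕ → ℤ) : Set (Fin (Dim n) → ℝ) :=
  {t | ∀ j, LamIneq n w lam j t}

/-- the polyhedron cut out by all `λ`-inequalities except the one of `j₀`. -/
def lamConeExcept (n : ℕ) (w : List ℕ) (lam : ℕ → ℤ) (j₀ : Fin (Dim n)) :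
    Set (Fin (Dim n) → ℝ) :=
  {t | ∀ j, j ≠ j₀ → LamIneq n w lam j t}

/-- the string polytope `Δ_i(λ) = C_i ∩ C_i^λ`. -/
def stringPolytope (n : ℕ) (w : List ℕ) (lam : ℕ → ℤ) : Set (Fin (Dim n) → ℝ) :=
  stringCone n w ∩ lamCone n w lam

/-- `λ = λ_1 ϖ_1 + ⋯ + λ_n ϖ_n` is a dominant integral weight: all `λ_j ≥ 0`. -/
def Dominant (n : ℕ) (lam : ℕ → ℤ) : Prop := ∀ j, 1 ≤ j → j ≤ n → 0 ≤ lam j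

/-- `λ` is a regular dominant integral weight: all `λ_j > 0`. -/
def RegularDominant (n : ℕ) (lam : ℕ → ℤ) : Prop := ∀ j, 1 ≤ j → j ≤ n → 0 < lam j

/-! ### Unimodular equivalence, Gelfand–Cetlin polytope, facets -/

/-- `P` and `Q` are unimodularly equivalent: `Q = M(P) + v` with `M ∈ GL(m, ℤ)`, `v ∈ ℤ^m`. -/
def UnimodEquiv {m : ℕ} (P Q : Set (Fin m → ℝ)) : Prop :=
  ∃ (M : Matrix (Fin m) (Fin m) ℤ) (v : Fin m → ℤ), IsUnit M.det ∧
    Q = (fun x i => (∑ j, (M i j : ℝ) * x j) + (v i : ℝ)) '' P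

/-- the entry `x_{k,j}` (`1 ≤ j ≤ k ≤ n+1`) of a Gelfand–Cetlin pattern, where the
top row is `x_{n+1,j} = λ_j + ⋯ + λ_n` and `x_{n+1,n+1} = 0`; the pair `(k, j)` is
encoded as the coordinate `k(k-1)/2 + (j-1)` of `ℝ^N`. -/
def gcX (n : ℕ) (lam : ℕ → ℤ) (x : Fin (Dim n) → ℝ) (k j : ℕ) : ℝ :=
  if k = n + 1 then (if j ≤ n then ∑ t ∈ Finset.Icc j n, (lam t : ℝ) else 0)
  else if h : k * (k - 1) / 2 + (j - 1) < Dim n then x ⟨k * (k - 1) / 2 + (j - 1), h⟩ else 0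

/-- the Gelfand–Cetlin polytope `GC(λ) ⊆ ℝ^N`. -/
def GCPolytope (n : ℕ) (lam : ℕ → ℤ) : Set (Fin (Dim n) → ℝ) :=
  {x | ∀ k j, 1 ≤ k → k ≤ n → 1 ≤ j → j ≤ k →
      gcX n lam x k j ≤ gcX n lam x (k + 1) j ∧
      gcX n lam x (k + 1) (j + 1) ≤ gcX n lam x k j}

/-- a face of a convex set: a convex extreme subset. -/
def IsFaceSet {m : ℕ} (S F : Set (Fin m → ℝ)) : Prop := IsExtreme ℝ S F ∧ Convex ℝ F

/-- a facet: a maximal proper face. -/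
def IsFacet {m : ℕ} (S F : Set (Fin m → ℝ)) : Prop :=
  IsFaceSet S F ∧ F ≠ S ∧ ∀ G, IsFaceSet S G → G ≠ S → F ⊆ G → F = G

/-- the number of facets. -/
def numFacets {m : ℕ} (S : Set (Fin m → ℝ)) : ℕ := {F | IsFacet S F}.ncard

/-- combinatorial equivalence: an inclusion-preserving bijection between face lattices. -/
def CombEquiv {m : ℕ} (S T : Set (Fin m → ℝ)) : Prop :=
  ∃ e : {F // IsFaceSet S F} ≃ {F // IsFaceSet T F},
    ∀ F G : {F // IsFaceSet S F}, F.1 ⊆ G.1 ↔ (e F).1 ⊆ (e G).1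

/-! ### Indices, contractions and extensions -/

/-- the `D`-index `ind_D(i) = |i_D^+|` for a decomposition `i ∼ i_D^- D_n i_D^+`
(independent of the decomposition). -/
def indD (n : ℕ) (w : List ℕ) : ℕ :=
  sInf {s | ∃ u v : List ℕ, v.length = s ∧ TwoMoveEquiv w (u ++ descWord n ++ v)}

/-- the `A`-index `ind_A(i) = |i_A^+|` for a decomposition `i ∼ i_A^- A_n i_A^+`. -/
def indA (n : ℕ) (w : List ℕ) : ℕ :=
  sInf {s | ∃ u v : List ℕ, v.length = s ∧ TwoMoveEquiv w (u ++ ascWord n ++ v)}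

/-- `w'` is a `D`-contraction `C_D(w) = i_D^- (i_D^+ - 1)` of `w ∈ Σ_{n+1}`. -/
def IsContractionD (n : ℕ) (w w' : List ℕ) : Prop :=
  ∃ u v : List ℕ, TwoMoveEquiv w (u ++ descWord n ++ v) ∧ w' = u ++ v.map (· - 1)

/-- `w'` is an `A`-contraction `C_A(w) = (i_A^- - 1) i_A^+` of `w ∈ Σ_{n+1}`. -/
def IsContractionA (n : ℕ) (w w' : List ℕ) : Prop :=
  ∃ u v : List ℕ, TwoMoveEquiv w (u ++ ascWord n ++ v) ∧ w' = u.map (· - 1) ++ v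

/-- the `D`-extension `E_D(s) : Σ_{n+1} → Σ_{n+2}`,
`i = i^-(s) i^+(s) ↦ i^-(s) D_{n+1} (i^+(s) + 1)` where `|i^+(s)| = s`. -/
def extD (n : ℕ) (s : ℕ) (w : List ℕ) : List ℕ :=
  w.take (w.length - s) ++ descWord (n + 1) ++ (w.drop (w.length - s)).map (· + 1)

/-- the `A`-extension `E_A(s) : Σ_{n+1} → Σ_{n+2}`,
`i = i^-(s) i^+(s) ↦ (i^-(s) + 1) A_{n+1} i^+(s)`. -/
def extA (n : ℕ) (s : ℕ) (w : List ℕ) : List ℕ :=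
  (w.take (w.length - s)).map (· + 1) ++ ascWord (n + 1) ++ w.drop (w.length - s)

/-- there exists `(σ_1, …, σ_n) ∈ {A, D}^n` (here `true = D`, `false = A`) such that
`ind_{σ_k}(C_{σ_{k+1}} ∘ ⋯ ∘ C_{σ_n}(i)) = 0` for all `k = n, …, 1`. -/
def SimplicialWord (n : ℕ) (w : List ℕ) : Prop :=
  ∃ (σ : ℕ → Bool) (c : ℕ → List ℕ), c n = w ∧
    ∀ k, 1 ≤ k → k ≤ n →
      (if σ k then IsContractionD k (c k) (c (k - 1)) ∧ indD k (c k) = 0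
       else IsContractionA k (c k) (c (k - 1)) ∧ indA k (c k) = 0)


/-- the `D`-coindex `coind_D(i) = |i_D^-|`. -/
def coindD (n : ℕ) (w : List ℕ) : ℕ :=
  sInf {s | ∃ u v : List ℕ, u.length = s ∧ TwoMoveEquiv w (u ++ descWord n ++ v)}

/-- the `A`-coindex `coind_A(i) = |i_A^-|`. -/
def coindA (n : ℕ) (w : List ℕ) : ℕ :=
  sInf {s | ∃ u v : List ℕ, u.length = s ∧ TwoMoveEquiv w (u ++ ascWord n ++ v)}

/-- the `a`-th (0-based) coordinate of a point of `ℝ^N`. -/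
def entry (n : ℕ) (t : Fin (Dim n) → ℝ) (a : ℕ) : ℝ :=
  if h : a < Dim n then t ⟨a, h⟩ else 0

/-- the product of cones
`t_1 ≥ 0`, `t_2 ≥ t_3 ≥ 0`, …, `t_{N-n+1} ≥ ⋯ ≥ t_N ≥ 0` (in `ℝ^N`, 1-based:
for `k = 1, …, n` the chain `t_{k(k-1)/2+1} ≥ ⋯ ≥ t_{k(k-1)/2+k} ≥ 0`). -/
def chainCone (n : ℕ) : Set (Fin (Dim n) → ℝ) :=
  {t | ∀ k j, 1 ≤ k → k ≤ n → 1 ≤ j → j ≤ k →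
    (if j = k then 0 else entry n t (k * (k - 1) / 2 + j)) ≤
      entry n t (k * (k - 1) / 2 + (j - 1))}

lemma sTrans_apply (a x : ℕ) : sTrans a x = if x = a then a + 1 else if x = a + 1 then a else x :=
  by rw [sTrans]; exact Equiv.swap_apply_def a (a+1) x

lemma sTrans_fix {a x : ℕ} (h1 : x ≠ a) (h2 : x ≠ a + 1) : sTrans a x = x :=
  by rw [sTrans]; exact Equiv.swap_apply_of_ne_of_ne h1 h2

@[simp] lemma wordProd_nil : wordProd [] = 1 := rfl

lemma wordProd_cons (a : ℕ) (w : List ℕ) : wordProd (a :: w) = sTrans a * wordProd w := by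
  simp [wordProd]

lemma wordProd_append (x y : List ℕ) : wordProd (x ++ y) = wordProd x * wordProd y := by
  simp [wordProd]

lemma sTrans_comm {a b : ℕ} (h : a + 1 < b ∨ b + 1 < a) :
    sTrans a * sTrans b = sTrans b * sTrans a := by
  ext x
  simp only [Equiv.Perm.mul_apply, sTrans_apply]
  split_ifs <;> omega

lemma TwoMoveStep.symm' {w w' : List ℕ} (h : TwoMoveStep w w') : TwoMoveStep w' w := by
  obtain ⟨u, v, a, b, hab, h1, h2⟩ := h
  exact ⟨u, v, b, a, hab.symm, h2, h1⟩

@[refl] lemma TwoMoveEquiv.refl (w : List ℕ) : TwoMoveEquiv w w := Relation.ReflTransGen.refl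

lemma TwoMoveEquiv.symm {w w' : List ℕ} (h : TwoMoveEquiv w w') : TwoMoveEquiv w' w := by
  induction h with
  | refl => exact Relation.ReflTransGen.refl
  | tail _ h2 ih => exact Relation.ReflTransGen.trans (Relation.ReflTransGen.single h2.symm') ih

lemma TwoMoveEquiv.trans {w₁ w₂ w₃ : List ℕ} (h1 : TwoMoveEquiv w₁ w₂) (h2 : TwoMoveEquiv w₂ w₃) :
    TwoMoveEquiv w₁ w₃ := Relation.ReflTransGen.trans h1 h2

lemma TwoMoveStep.appendCongr {w w' : List ℕ} (x y : List ℕ) (h : TwoMoveStep w w') :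
    TwoMoveStep (x ++ w ++ y) (x ++ w' ++ y) := by
  obtain ⟨u, v, a, b, hab, h1, h2⟩ := h
  exact ⟨x ++ u, v ++ y, a, b, hab, by simp [h1], by simp [h2]⟩

lemma TwoMoveEquiv.appendCongr {w w' : List ℕ} (x y : List ℕ) (h : TwoMoveEquiv w w') :
    TwoMoveEquiv (x ++ w ++ y) (x ++ w' ++ y) :=
  Relation.ReflTransGen.lift (p := TwoMoveStep) (fun t => x ++ t ++ y)
    (fun a b (hs : TwoMoveStep a b) => hs.appendCongr x y) _ _ h

lemma TwoMoveEquiv.congrLeft {w w' : List ℕ} (h : TwoMoveEquiv w w') (x : List ℕ) :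
    TwoMoveEquiv (x ++ w) (x ++ w') := by simpa using h.appendCongr x []

lemma TwoMoveEquiv.congrRight {w w' : List ℕ} (h : TwoMoveEquiv w w') (y : List ℕ) :
    TwoMoveEquiv (w ++ y) (w' ++ y) := by simpa using h.appendCongr [] y

lemma TwoMoveEquiv.consCongr {w w' : List ℕ} (a : ℕ) (h : TwoMoveEquiv w w') :
    TwoMoveEquiv (a :: w) (a :: w') := by simpa using h.congrLeft [a]

def Comm (a b : ℕ) : Prop := a + 1 < b ∨ b + 1 < a

lemma Comm.symm {a b : ℕ} (h : Comm a b) : Comm b a := Or.symm h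

lemma equiv_cons_to_append {a : ℕ} {y : List ℕ} (h : ∀ b ∈ y, Comm a b) :
    TwoMoveEquiv (a :: y) (y ++ [a]) := by
  induction y with
  | nil => exact TwoMoveEquiv.refl _
  | cons b y ih =>
    have h1 : TwoMoveStep (a :: b :: y) (b :: a :: y) :=
      ⟨[], y, a, b, h b (by simp), rfl, rfl⟩
    exact Relation.ReflTransGen.head h1
      ((ih (fun c hc => h c (by simp [hc]))).consCongr b)

lemma equiv_blocks_swap {x y : List ℕ} (h : ∀ a ∈ x, ∀ b ∈ y, Comm a b) :
    TwoMoveEquiv (x ++ y) (y ++ x) := by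
  induction x with
  | nil => simpa using TwoMoveEquiv.refl y
  | cons a x ih =>
    have h1 : TwoMoveEquiv (a :: (x ++ y)) (a :: (y ++ x)) :=
      (ih (fun c hc b hb => h c (by simp [hc]) b hb)).consCongr a
    have h2 : TwoMoveEquiv ((a :: y) ++ x) ((y ++ [a]) ++ x) :=
      (equiv_cons_to_append (fun b hb => h a (by simp) b hb)).congrRight x
    refine h1.trans ((TwoMoveEquiv.refl ((a :: y) ++ x)).trans ?_)
    simpa [List.append_assoc] using h2

lemma equiv_filter_split (p : ℕ → Bool) {x : List ℕ}
    (h : ∀ a ∈ x, ∀ b ∈ x, p a = true → p b = false → Comm a b) :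
    TwoMoveEquiv x (x.filter p ++ x.filter (fun a => ! p a)) := by
  induction x with
  | nil => exact TwoMoveEquiv.refl _
  | cons a x ih =>
    have ih' := ih (fun c hc b hb => h c (by simp [hc]) b (by simp [hb]))
    by_cases hp : p a = true
    · simpa [List.filter_cons, hp] using ih'.consCongr a
    · have hpa : p a = false := by simpa using hp
      have h1 : TwoMoveEquiv (a :: x) (a :: (x.filter p ++ x.filter (fun a => ! p a))) :=
        ih'.consCongr a
      have h2 : TwoMoveEquiv ((a :: x.filter p) ++ x.filter (fun a => ! p a))
          ((x.filter p ++ [a]) ++ x.filter (fun a => ! p a)) := by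
        refine (equiv_cons_to_append ?_).congrRight _
        intro b hb
        exact (h b (by simp [(List.mem_filter.1 hb).1]) a (by simp)
          (List.mem_filter.1 hb).2 hpa).symm
      have h3 : TwoMoveEquiv (a :: (x.filter p ++ x.filter (fun a => ! p a)))
          (x.filter p ++ a :: x.filter (fun a => ! p a)) := by
        simpa [List.append_assoc] using h2
      simpa [List.filter_cons, hpa] using h1.trans h3

lemma TwoMoveStep.perm {w w' : List ℕ} (h : TwoMoveStep w w') : w.Perm w' := by
  obtain ⟨u, v, a, b, _, h1, h2⟩ := h
  subst h1; subst h2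
  exact List.Perm.append_left u (List.Perm.swap b a v)

lemma TwoMoveEquiv.perm {w w' : List ℕ} (h : TwoMoveEquiv w w') : w.Perm w' := by
  induction h with
  | refl => exact List.Perm.refl _
  | tail _ h2 ih => exact ih.trans h2.perm

lemma TwoMoveStep.prod_eq {w w' : List ℕ} (h : TwoMoveStep w w') :
    wordProd w = wordProd w' := by
  obtain ⟨u, v, a, b, hab, h1, h2⟩ := h
  subst h1; subst h2
  simp only [wordProd_append, wordProd_cons]
  rw [← mul_assoc (sTrans a), ← mul_assoc (sTrans b), sTrans_comm hab]

lemma TwoMoveEquiv.prod_eq {w w' : List ℕ} (h : TwoMoveEquiv w w') :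
    wordProd w = wordProd w' := by
  induction h with
  | refl => rfl
  | tail _ h2 ih => exact ih.trans h2.prod_eq

lemma longestPerm_apply (n x : ℕ) :
    longestPerm n x = if 1 ≤ x ∧ x ≤ n + 1 then n + 2 - x else x := rfl

lemma two_mul_dim (n : ℕ) : 2 * (n * (n + 1) / 2) = n * (n + 1) := by
  induction n with
  | zero => rfl
  | succ n ih =>
    have h : (n + 1) * (n + 1 + 1) = n * (n + 1) + 2 * (n + 1) := by ring
    omega

lemma dim_succ (n : ℕ) : Dim (n + 1) = Dim n + (n + 1) := by
  have h1 := two_mul_dim n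
  have h2 := two_mul_dim (n + 1)
  have h : (n + 1) * (n + 1 + 1) = n * (n + 1) + 2 * (n + 1) := by ring
  show (n + 1) * (n + 1 + 1) / 2 = n * (n + 1) / 2 + (n + 1)
  omega

def descRun : ℕ → ℕ → List ℕ
  | _, 0 => []
  | d, k + 1 => d :: descRun (d - 1) k

def ascRun : ℕ → ℕ → List ℕ
  | _, 0 => []
  | e, k + 1 => e :: ascRun (e + 1) k

lemma descRun_append (d k : ℕ) : descRun d k ++ [d - k] = descRun d (k + 1) := by
  induction k generalizing d with
  | zero => simp [descRun]
  | succ k ih =>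
    have h : d - (k + 1) = d - 1 - k := by omega
    show d :: descRun (d - 1) k ++ [d - (k + 1)] = d :: descRun (d - 1) (k + 1)
    rw [List.cons_append, h, ih (d - 1)]

lemma descRun_split (d k1 k2 : ℕ) :
    descRun d (k1 + k2) = descRun d k1 ++ descRun (d - k1) k2 := by
  induction k1 generalizing d with
  | zero => simp [descRun]
  | succ k1 ih =>
    have h : d - (k1 + 1) = d - 1 - k1 := by omega
    have h2 : k1 + 1 + k2 = (k1 + k2) + 1 := by omega
    simp only [h2, descRun, ih (d - 1), List.cons_append, h]

lemma mem_descRun {d k a : ℕ} (hk : k ≤ d) (ha : a ∈ descRun d k) : d - k < a ∧ a ≤ d := by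
  induction k generalizing d with
  | zero => simp [descRun] at ha
  | succ k ih =>
    simp only [descRun, List.mem_cons] at ha
    rcases ha with rfl | ha
    · omega
    · have := ih (d := d - 1) (by omega) ha
      omega

lemma ascRun_append (e k : ℕ) : ascRun e k ++ [e + k] = ascRun e (k + 1) := by
  induction k generalizing e with
  | zero => simp [ascRun]
  | succ k ih =>
    have h : e + (k + 1) = e + 1 + k := by omega
    show e :: ascRun (e + 1) k ++ [e + (k + 1)] = e :: ascRun (e + 1) (k + 1)
    rw [List.cons_append, h, ih (e + 1)]

lemma mem_ascRun {e k a : ℕ} (ha : a ∈ ascRun e k) : e ≤ a ∧ a < e + k := by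
  induction k generalizing e with
  | zero => simp [ascRun] at ha
  | succ k ih =>
    simp only [ascRun, List.mem_cons] at ha
    rcases ha with rfl | ha
    · omega
    · have := ih (e := e + 1) ha
      omega

lemma ascWord_succ (m : ℕ) : ascWord (m + 1) = ascWord m ++ [m + 1] := by
  simp [ascWord, List.range_succ]

lemma descWord_succ (m : ℕ) : descWord (m + 1) = (m + 1) :: descWord m := by
  simp [descWord, ascWord_succ]

lemma ascWord_eq (m : ℕ) : ascWord m = ascRun 1 m := by
  induction m with
  | zero => rfl
  | succ m ih => rw [ascWord_succ, ih, ← ascRun_append]; simp [Nat.add_comm]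

lemma descWord_eq (m : ℕ) : descWord m = descRun m m := by
  induction m with
  | zero => rfl
  | succ m ih => rw [descWord_succ, ih]; rfl

lemma length_descWord (m : ℕ) : (descWord m).length = m := by simp [descWord, ascWord]

lemma length_ascWord (m : ℕ) : (ascWord m).length = m := by simp [ascWord]

lemma mem_descWord {m a : ℕ} (ha : a ∈ descWord m) : 1 ≤ a ∧ a ≤ m := by
  rw [descWord_eq] at ha
  have := mem_descRun (le_refl m) ha
  omega

lemma mem_ascWord {m a : ℕ} (ha : a ∈ ascWord m) : 1 ≤ a ∧ a ≤ m := by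
  rw [ascWord_eq] at ha
  have := mem_ascRun ha
  omega

lemma wordProd_descWord (m : ℕ) (x : ℕ) :
    wordProd (descWord m) x = if x = 1 then m + 1 else if x ≤ m + 1 then x - 1 else x := by
  induction m generalizing x with
  | zero =>
    simp only [descWord, ascWord, List.range_zero, List.map_nil, List.reverse_nil,
      wordProd_nil, Equiv.Perm.one_apply]
    split_ifs <;> omega
  | succ m ih =>
    rw [descWord_succ, wordProd_cons, Equiv.Perm.mul_apply, ih x]
    simp only [sTrans_apply]
    split_ifs <;> omega

lemma wordProd_ascWord (m : ℕ) (x : ℕ) :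
    wordProd (ascWord m) x = if x = m + 1 then 1 else if 1 ≤ x ∧ x ≤ m then x + 1 else x := by
  induction m generalizing x with
  | zero =>
    simp only [ascWord, List.range_zero, List.map_nil, wordProd_nil, Equiv.Perm.one_apply]
    split_ifs <;> omega
  | succ m ih =>
    rw [ascWord_succ, wordProd_append, Equiv.Perm.mul_apply]
    simp only [wordProd_cons, wordProd_nil, mul_one, sTrans_apply, ih]
    split_ifs <;> omega

lemma longest_succ_D (n : ℕ) :
    longestPerm (n + 1) = longestPerm n * wordProd (descWord (n + 1)) := by
  ext x
  simp only [Equiv.Perm.mul_apply, wordProd_descWord, longestPerm_apply]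
  split_ifs <;> omega

lemma longest_succ_A (n : ℕ) :
    longestPerm (n + 1) = wordProd (ascWord (n + 1)) * longestPerm n := by
  ext x
  simp only [Equiv.Perm.mul_apply, wordProd_ascWord, longestPerm_apply]
  split_ifs <;> omega

lemma sTrans_conj_D {m a : ℕ} (ha1 : 1 ≤ a) (ha2 : a + 1 ≤ m) :
    wordProd (descWord m) * sTrans (a + 1) = sTrans a * wordProd (descWord m) := by
  ext x
  simp only [Equiv.Perm.mul_apply, wordProd_descWord, sTrans_apply]
  split_ifs <;> omega

lemma sTrans_conj_A {m a : ℕ} (ha1 : 1 ≤ a) (ha2 : a + 1 ≤ m) :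
    sTrans (a + 1) * wordProd (ascWord m) = wordProd (ascWord m) * sTrans a := by
  ext x
  simp only [Equiv.Perm.mul_apply, wordProd_ascWord, sTrans_apply]
  split_ifs <;> omega

lemma shiftD {m : ℕ} {x : List ℕ} (hx : ∀ a ∈ x, 1 ≤ a ∧ a + 1 ≤ m) :
    wordProd (descWord m) * wordProd (x.map (· + 1)) = wordProd x * wordProd (descWord m) := by
  induction x with
  | nil => simp
  | cons a x ih =>
    have ha := hx a (by simp)
    simp only [List.map_cons, wordProd_cons]
    rw [← mul_assoc, sTrans_conj_D ha.1 ha.2, mul_assoc,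
      ih (fun b hb => hx b (by simp [hb])), ← mul_assoc]

lemma shiftA {m : ℕ} {x : List ℕ} (hx : ∀ a ∈ x, 1 ≤ a ∧ a + 1 ≤ m) :
    wordProd (x.map (· + 1)) * wordProd (ascWord m) = wordProd (ascWord m) * wordProd x := by
  induction x with
  | nil => simp
  | cons a x ih =>
    have ha := hx a (by simp)
    simp only [List.map_cons, wordProd_cons]
    rw [mul_assoc, ih (fun b hb => hx b (by simp [hb])), ← mul_assoc,
      sTrans_conj_A ha.1 ha.2, mul_assoc]

/-! ### inversion counting -/

def pairSet (M : ℕ) : Finset (ℕ × ℕ) := Finset.Icc 1 M ×ˢ Finset.Icc 1 M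

noncomputable def invCount (M : ℕ) (p : Equiv.Perm ℕ) : ℕ :=
  ((pairSet M).filter (fun q => q.1 < q.2 ∧ p q.2 < p q.1)).card

lemma sTrans_invol (a x : ℕ) : sTrans a (sTrans a x) = x := by
  rw [sTrans]; exact Equiv.swap_apply_self ..

lemma sTrans_mem_Icc {M a x : ℕ} (ha1 : 1 ≤ a) (ha2 : a + 1 ≤ M) (hx1 : 1 ≤ x) (hx2 : x ≤ M) :
    1 ≤ sTrans a x ∧ sTrans a x ≤ M := by
  rw [sTrans_apply]; split_ifs <;> omega

lemma invCount_mul_ascent {M a : ℕ} (p : Equiv.Perm ℕ) (ha1 : 1 ≤ a) (ha2 : a + 1 ≤ M)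
    (h : p a < p (a + 1)) : invCount M (p * sTrans a) = invCount M p + 1 := by
  have hmem : ∀ q ∈ pairSet M, (sTrans a q.1, sTrans a q.2) ∈ pairSet M := by
    rintro ⟨x, y⟩ hq
    simp only [pairSet, Finset.mem_product, Finset.mem_Icc] at hq ⊢
    exact ⟨sTrans_mem_Icc ha1 ha2 hq.1.1 hq.1.2, sTrans_mem_Icc ha1 ha2 hq.2.1 hq.2.2⟩
  have hA : invCount M (p * sTrans a)
      = ((pairSet M).filter (fun q => sTrans a q.1 < sTrans a q.2 ∧ p q.2 < p q.1)).card := by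
    unfold invCount
    apply Finset.card_nbij' (i := fun q => (sTrans a q.1, sTrans a q.2))
      (j := fun q => (sTrans a q.1, sTrans a q.2))
    · rintro ⟨x, y⟩ hq
      rw [Finset.mem_coe, Finset.mem_filter] at hq ⊢
      refine ⟨hmem _ hq.1, ?_⟩
      obtain ⟨-, h1, h2⟩ := hq
      simp only [Equiv.Perm.mul_apply] at h2
      exact ⟨by simpa [sTrans_invol] using h1, h2⟩
    · rintro ⟨x, y⟩ hq
      rw [Finset.mem_coe, Finset.mem_filter] at hq ⊢
      refine ⟨hmem _ hq.1, ?_⟩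
      obtain ⟨-, h1, h2⟩ := hq
      simp only [Equiv.Perm.mul_apply, sTrans_invol]
      exact ⟨h1, by simpa [sTrans_invol] using h2⟩
    · rintro ⟨x, y⟩ _; simp [sTrans_invol]
    · rintro ⟨x, y⟩ _; simp [sTrans_invol]
  have hkey : ∀ x y : ℕ, ¬(x = a ∧ y = a + 1) → ¬(x = a + 1 ∧ y = a) →
      (sTrans a x < sTrans a y ↔ x < y) := by
    intro x y h1 h2
    simp only [sTrans_apply]
    split_ifs <;> omega
  have hB : (pairSet M).filter (fun q => sTrans a q.1 < sTrans a q.2 ∧ p q.2 < p q.1)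
      = insert (a + 1, a) ((pairSet M).filter (fun q => q.1 < q.2 ∧ p q.2 < p q.1)) := by
    ext ⟨x, y⟩
    simp only [Finset.mem_insert, Finset.mem_filter, Prod.mk.injEq]
    constructor
    · rintro ⟨hq, hlt, hp⟩
      by_cases hxy : x = a + 1 ∧ y = a
      · exact Or.inl hxy
      · refine Or.inr ⟨hq, ?_, hp⟩
        have hxy2 : ¬(x = a ∧ y = a + 1) := by
          rintro ⟨rfl, rfl⟩
          simp only [sTrans_apply] at hlt
          split_ifs at hlt <;> omega
        exact (hkey x y hxy2 hxy).1 hlt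
    · rintro (⟨rfl, rfl⟩ | ⟨hq, hlt, hp⟩)
      · refine ⟨?_, ?_, h⟩
        · simp only [pairSet, Finset.mem_product, Finset.mem_Icc]; omega
        · simp only [sTrans_apply]; split_ifs <;> omega
      · have hxy : ¬(x = a + 1 ∧ y = a) := by rintro ⟨rfl, rfl⟩; omega
        have hxy2 : ¬(x = a ∧ y = a + 1) := by
          rintro ⟨rfl, rfl⟩
          exact absurd hp (not_lt.2 h.le)
        exact ⟨hq, (hkey x y hxy2 hxy).2 hlt, hp⟩
  have hnot : (a + 1, a) ∉ (pairSet M).filter (fun q : ℕ × ℕ => q.1 < q.2 ∧ p q.2 < p q.1) := by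
    simp only [Finset.mem_filter]
    rintro ⟨-, hlt, -⟩
    omega
  rw [hA, hB, Finset.card_insert_of_notMem hnot]
  rfl

lemma invCount_mul_descent {M a : ℕ} (p : Equiv.Perm ℕ) (ha1 : 1 ≤ a) (ha2 : a + 1 ≤ M)
    (h : p (a + 1) < p a) : invCount M (p * sTrans a) + 1 = invCount M p := by
  have h2 : (p * sTrans a) a < (p * sTrans a) (a + 1) := by
    simp only [Equiv.Perm.mul_apply, sTrans_apply]
    split_ifs <;> omega
  have := invCount_mul_ascent (p * sTrans a) ha1 ha2 h2
  have hps : p * sTrans a * sTrans a = p := by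
    rw [mul_assoc, sTrans, Equiv.swap_mul_self, mul_one]
  rw [hps] at this
  omega

lemma invCount_mul_bounds {M a : ℕ} (p : Equiv.Perm ℕ) (ha1 : 1 ≤ a) (ha2 : a + 1 ≤ M) :
    invCount M (p * sTrans a) ≤ invCount M p + 1 ∧ invCount M p ≤ invCount M (p * sTrans a) + 1 := by
  rcases lt_trichotomy (p a) (p (a + 1)) with h | h | h
  · have := invCount_mul_ascent p ha1 ha2 h; omega
  · exact absurd (p.injective h) (by omega)
  · have := invCount_mul_descent p ha1 ha2 h; omega

lemma invCount_wordProd_bounds {M : ℕ} (w : List ℕ) (hw : ∀ a ∈ w, 1 ≤ a ∧ a + 1 ≤ M) :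
    ∀ p : Equiv.Perm ℕ, invCount M (p * wordProd w) ≤ invCount M p + w.length ∧
      invCount M p ≤ invCount M (p * wordProd w) + w.length := by
  induction w with
  | nil => intro p; simp
  | cons a w ih =>
    intro p
    have ha := hw a (by simp)
    have h1 : p * wordProd (a :: w) = (p * sTrans a) * wordProd w := by
      rw [wordProd_cons, mul_assoc]
    have h2 := ih (fun b hb => hw b (by simp [hb])) (p * sTrans a)
    have h3 := invCount_mul_bounds p ha.1 ha.2
    rw [h1]
    simp only [List.length_cons]
    omega

lemma invCount_one (M : ℕ) : invCount M 1 = 0 := by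
  unfold invCount
  rw [Finset.card_eq_zero, Finset.filter_eq_empty_iff]
  rintro ⟨x, y⟩ _
  simp only [Equiv.Perm.one_apply]
  omega

lemma invCount_longestPerm (m : ℕ) : invCount (m + 1) (longestPerm m) = m * (m + 1) / 2 := by
  have h1 : (pairSet (m + 1)).filter
        (fun q => q.1 < q.2 ∧ longestPerm m q.2 < longestPerm m q.1)
      = (pairSet (m + 1)).filter (fun q => q.1 < q.2) := by
    ext ⟨x, y⟩
    rw [Finset.mem_filter, Finset.mem_filter]
    simp only [Finset.mem_filter, pairSet, Finset.mem_product, Finset.mem_Icc, longestPerm_apply]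
    constructor
    · rintro ⟨hq, hlt, -⟩; exact ⟨hq, hlt⟩
    · rintro ⟨⟨⟨hx1, hx2⟩, hy1, hy2⟩, hlt⟩
      refine ⟨⟨⟨hx1, hx2⟩, hy1, hy2⟩, hlt, ?_⟩
      split_ifs <;> omega
  have hcardS : (pairSet (m + 1)).card = (m + 1) * (m + 1) := by
    simp [pairSet, Nat.card_Icc]
  have hsym : ((pairSet (m + 1)).filter (fun q => q.1 < q.2)).card
      = ((pairSet (m + 1)).filter (fun q => q.2 < q.1)).card := by
    apply Finset.card_nbij' (i := Prod.swap) (j := Prod.swap)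
    · rintro ⟨x, y⟩ hq
      simp only [Finset.mem_coe, Finset.mem_filter, pairSet, Finset.mem_product] at hq ⊢
      exact ⟨⟨hq.1.2, hq.1.1⟩, hq.2⟩
    · rintro ⟨x, y⟩ hq
      simp only [Finset.mem_coe, Finset.mem_filter, pairSet, Finset.mem_product] at hq ⊢
      exact ⟨⟨hq.1.2, hq.1.1⟩, hq.2⟩
    · rintro ⟨x, y⟩ _; rfl
    · rintro ⟨x, y⟩ _; rfl
  have hsplit1 : ((pairSet (m + 1)).filter (fun q => q.1 < q.2)).card
      + ((pairSet (m + 1)).filter (fun q => ¬ q.1 < q.2)).card = (pairSet (m + 1)).card :=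
    Finset.card_filter_add_card_filter_not _
  have hsplit2 : (((pairSet (m + 1)).filter (fun q => ¬ q.1 < q.2)).filter
        (fun q => q.2 < q.1)).card
      + (((pairSet (m + 1)).filter (fun q => ¬ q.1 < q.2)).filter
        (fun q => ¬ q.2 < q.1)).card
      = ((pairSet (m + 1)).filter (fun q => ¬ q.1 < q.2)).card :=
    Finset.card_filter_add_card_filter_not _
  have he1 : ((pairSet (m + 1)).filter (fun q => ¬ q.1 < q.2)).filter (fun q => q.2 < q.1)
      = (pairSet (m + 1)).filter (fun q => q.2 < q.1) := by
    rw [Finset.filter_filter]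
    apply Finset.filter_congr
    rintro ⟨x, y⟩ _
    constructor
    · rintro ⟨-, h⟩; exact h
    · intro h; exact ⟨by omega, h⟩
  have he2 : (((pairSet (m + 1)).filter (fun q => ¬ q.1 < q.2)).filter
      (fun q => ¬ q.2 < q.1)).card = m + 1 := by
    rw [Finset.filter_filter]
    have hbij : (Finset.filter (fun q : ℕ × ℕ => ¬q.1 < q.2 ∧ ¬q.2 < q.1)
        (pairSet (m + 1))).card = (Finset.Icc 1 (m + 1)).card := by
      apply Finset.card_nbij' (i := fun q => q.1) (j := fun x => (x, x))
      · rintro ⟨x, y⟩ hq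
        simp only [Finset.mem_coe, Finset.mem_filter, pairSet, Finset.mem_product] at hq
        exact hq.1.1
      · intro x hx
        simp only [Finset.mem_coe, Finset.mem_filter, pairSet, Finset.mem_product]
        exact ⟨⟨hx, hx⟩, by omega, by omega⟩
      · rintro ⟨x, y⟩ hq
        simp only [Finset.mem_coe, Finset.mem_filter] at hq
        have : x = y := by omega
        simp [this]
      · intro x _; rfl
    rw [hbij, Nat.card_Icc]
    omega
  rw [invCount, h1]
  have harith : (m + 1) * (m + 1) = m * (m + 1) + (m + 1) := by ring
  have h2d := two_mul_dim m
  have hIcc : (Finset.Icc 1 (m + 1)).card = m + 1 := by simp [Nat.card_Icc]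
  rw [he1] at hsplit2
  rw [he2] at hsplit2
  omega

lemma reduced_ascent {m : ℕ} {w x y : List ℕ} {a : ℕ} (hw : IsReduced m w)
    (hs : w = x ++ a :: y) : wordProd x a < wordProd x (a + 1) := by
  obtain ⟨hlen, hlet, hprod⟩ := hw
  have hlet' : ∀ b ∈ w, 1 ≤ b ∧ b + 1 ≤ m + 1 := fun b hb => by
    have := hlet b hb; omega
  have hxlet : ∀ b ∈ x, 1 ≤ b ∧ b + 1 ≤ m + 1 := fun b hb =>
    hlet' b (by simp [hs, hb])
  have hylet : ∀ b ∈ y, 1 ≤ b ∧ b + 1 ≤ m + 1 := fun b hb =>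
    hlet' b (by simp [hs, hb])
  have ha : 1 ≤ a ∧ a + 1 ≤ m + 1 := hlet' a (by simp [hs])
  have htot : invCount (m + 1) (wordProd w) = w.length := by
    rw [hprod, invCount_longestPerm, hlen]
  have hx := invCount_wordProd_bounds x hxlet 1
  rw [one_mul] at hx
  rw [invCount_one] at hx
  have hy := invCount_wordProd_bounds y hylet (wordProd x * sTrans a)
  have hw2 : wordProd w = wordProd x * sTrans a * wordProd y := by
    rw [hs, wordProd_append, wordProd_cons, mul_assoc]
  have hstep := invCount_mul_bounds (wordProd x) ha.1 ha.2 (a := a)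
  have hlen2 : w.length = x.length + 1 + y.length := by
    rw [hs]; simp only [List.length_append, List.length_cons]; omega
  rw [hw2] at htot
  -- invCount (m+1) (wordProd x * sTrans a) = invCount (m+1) (wordProd x) + 1
  rcases lt_trichotomy (wordProd x a) (wordProd x (a + 1)) with hlt | heq | hgt
  · exact hlt
  · exact absurd ((wordProd x).injective heq) (by omega)
  · exfalso
    have hd := invCount_mul_descent (wordProd x) ha.1 ha.2 hgt
    omega

/-! ### trajectories -/

def traj : ℕ → List ℕ → ℕ
  | W, [] => W
  | W, a :: w => traj (sTrans a W) w

@[simp] lemma traj_nil (W : ℕ) : traj W [] = W := rfl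

lemma traj_cons (W a : ℕ) (w : List ℕ) : traj W (a :: w) = traj (sTrans a W) w := rfl

lemma traj_append (W : ℕ) (x y : List ℕ) : traj W (x ++ y) = traj (traj W x) y := by
  induction x generalizing W with
  | nil => rfl
  | cons a x ih => simp only [List.cons_append, traj_cons, ih]

lemma traj_singleton (W a : ℕ) : traj W [a] = sTrans a W := rfl

lemma traj_eq_symm (W : ℕ) (w : List ℕ) : traj W w = (wordProd w).symm W := by
  induction w generalizing W with
  | nil => simp; rfl
  | cons a w ih =>
    rw [traj_cons, ih, wordProd_cons, Equiv.Perm.mul_def, Equiv.symm_trans_apply]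
    simp [sTrans]

lemma traj_bound {M : ℕ} {w : List ℕ} (hw : ∀ a ∈ w, 1 ≤ a ∧ a + 1 ≤ M) {W : ℕ}
    (hW : 1 ≤ W ∧ W ≤ M) : 1 ≤ traj W w ∧ traj W w ≤ M := by
  induction w generalizing W with
  | nil => simpa using hW
  | cons a w ih =>
    rw [traj_cons]
    have ha := hw a (by simp)
    exact ih (fun b hb => hw b (by simp [hb])) (sTrans_mem_Icc ha.1 ha.2 hW.1 hW.2)

lemma traj_fix {W : ℕ} {w : List ℕ} (hw : ∀ a ∈ w, a ≠ W ∧ a + 1 ≠ W) : traj W w = W := by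
  induction w with
  | nil => rfl
  | cons a w ih =>
    have ha := hw a (by simp)
    rw [traj_cons, sTrans_fix (fun h => ha.1 h.symm) (fun h => ha.2 h.symm)]
    exact ih (fun b hb => hw b (by simp [hb]))

lemma wordProd_bound {M : ℕ} {w : List ℕ} (hw : ∀ a ∈ w, 1 ≤ a ∧ a + 1 ≤ M) :
    ∀ x, 1 ≤ x → x ≤ M → 1 ≤ wordProd w x ∧ wordProd w x ≤ M := by
  induction w with
  | nil => intro x h1 h2; simpa using ⟨h1, h2⟩
  | cons a w ih =>
    intro x h1 h2
    have ha := hw a (by simp)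
    rw [wordProd_cons, Equiv.Perm.mul_apply]
    have := ih (fun b hb => hw b (by simp [hb])) x h1 h2
    exact sTrans_mem_Icc ha.1 ha.2 this.1 this.2

lemma traj_step_le {m : ℕ} {w x y : List ℕ} {a : ℕ} (hw : IsReduced m w)
    (hs : w = x ++ a :: y) : sTrans a (traj (m + 1) x) ≤ traj (m + 1) x := by
  have hasc := reduced_ascent hw hs
  have hxlet : ∀ b ∈ x, 1 ≤ b ∧ b + 1 ≤ m + 1 := fun b hb => by
    have := hw.2.1 b (by simp [hs, hb]); omega
  have ha : 1 ≤ a ∧ a ≤ m := hw.2.1 a (by simp [hs])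
  set c := traj (m + 1) x with hc
  have hcs : c = (wordProd x).symm (m + 1) := by rw [hc, traj_eq_symm]
  have hne : c ≠ a := by
    intro hca
    have hpa : wordProd x a = m + 1 := by
      rw [← hca, hcs]; exact Equiv.apply_symm_apply _ _
    have hb := wordProd_bound hxlet (a + 1) (by omega) (by omega)
    have : wordProd x (a + 1) ≠ m + 1 := by
      rw [← hpa]
      exact fun h => by have := (wordProd x).injective h; omega
    omega
  rw [sTrans_apply]
  split_ifs <;> omega

lemma traj_step_ge {m : ℕ} {w x y : List ℕ} {a : ℕ} (hw : IsReduced m w)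
    (hs : w = x ++ a :: y) : traj 1 x ≤ sTrans a (traj 1 x) := by
  have hasc := reduced_ascent hw hs
  have hxlet : ∀ b ∈ x, 1 ≤ b ∧ b + 1 ≤ m + 1 := fun b hb => by
    have := hw.2.1 b (by simp [hs, hb]); omega
  have ha : 1 ≤ a ∧ a ≤ m := hw.2.1 a (by simp [hs])
  set c := traj 1 x with hc
  have hcs : c = (wordProd x).symm 1 := by rw [hc, traj_eq_symm]
  have hne : c ≠ a + 1 := by
    intro hca
    have hpa : wordProd x (a + 1) = 1 := by
      rw [← hca, hcs]; exact Equiv.apply_symm_apply _ _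
    have hb := wordProd_bound hxlet a (by omega) (by omega)
    have : wordProd x a ≠ 1 := by
      rw [← hpa]
      exact fun h => by have := (wordProd x).injective h; omega
    omega
  rw [sTrans_apply]
  split_ifs <;> omega

lemma traj_prefix_le {m : ℕ} {w : List ℕ} (hw : IsReduced m w) :
    ∀ (y x z : List ℕ), w = x ++ (y ++ z) → traj (m + 1) (x ++ y) ≤ traj (m + 1) x := by
  intro y
  induction y with
  | nil => intro x z _; simp
  | cons b y ih =>
    intro x z hsplit
    have h1 : w = x ++ b :: (y ++ z) := by simpa using hsplit
    have hstep := traj_step_le hw h1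
    have h2 : w = (x ++ [b]) ++ (y ++ z) := by simp [hsplit]
    have h3 := ih (x ++ [b]) z h2
    have h4 : traj (m + 1) (x ++ b :: y) = traj (m + 1) ((x ++ [b]) ++ y) := by
      congr 1
      simp
    have h5 : traj (m + 1) (x ++ [b]) = sTrans b (traj (m + 1) x) := by
      rw [traj_append, traj_singleton]
    rw [h4]
    calc traj (m + 1) ((x ++ [b]) ++ y) ≤ traj (m + 1) (x ++ [b]) := h3
      _ = sTrans b (traj (m + 1) x) := h5
      _ ≤ traj (m + 1) x := hstep

lemma traj_prefix_ge {m : ℕ} {w : List ℕ} (hw : IsReduced m w) :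
    ∀ (y x z : List ℕ), w = x ++ (y ++ z) → traj 1 x ≤ traj 1 (x ++ y) := by
  intro y
  induction y with
  | nil => intro x z _; simp
  | cons b y ih =>
    intro x z hsplit
    have h1 : w = x ++ b :: (y ++ z) := by simpa using hsplit
    have hstep := traj_step_ge hw h1
    have h2 : w = (x ++ [b]) ++ (y ++ z) := by simp [hsplit]
    have h3 := ih (x ++ [b]) z h2
    have h4 : traj 1 (x ++ b :: y) = traj 1 ((x ++ [b]) ++ y) := by
      congr 1
      simp
    have h5 : traj 1 (x ++ [b]) = sTrans b (traj 1 x) := by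
      rw [traj_append, traj_singleton]
    rw [h4]
    calc traj 1 x ≤ sTrans b (traj 1 x) := hstep
      _ = traj 1 (x ++ [b]) := h5.symm
      _ ≤ traj 1 ((x ++ [b]) ++ y) := h3

/-! ### contraction -/

def ctr : ℕ → List ℕ → List ℕ
  | _, [] => []
  | W, a :: w =>
    if W = a ∨ W = a + 1 then ctr (sTrans a W) w
    else if W < a then (a - 1) :: ctr W w else a :: ctr W w

def blw : ℕ → List ℕ → ℕ
  | _, [] => 0
  | W, a :: w =>
    if W = a ∨ W = a + 1 then blw (sTrans a W) w
    else if W < a then 1 + blw W w else blw W w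

@[simp] lemma ctr_nil (W : ℕ) : ctr W [] = [] := rfl

@[simp] lemma blw_nil (W : ℕ) : blw W [] = 0 := rfl

lemma ctr_cons_on {W a : ℕ} (w : List ℕ) (h : W = a ∨ W = a + 1) :
    ctr W (a :: w) = ctr (sTrans a W) w := by simp only [ctr, if_pos h]

lemma ctr_cons_off {W a : ℕ} (w : List ℕ) (h : ¬(W = a ∨ W = a + 1)) :
    ctr W (a :: w) = (if W < a then a - 1 else a) :: ctr W w := by
  simp only [ctr, if_neg h]
  split_ifs <;> rfl

lemma blw_cons_on {W a : ℕ} (w : List ℕ) (h : W = a ∨ W = a + 1) :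
    blw W (a :: w) = blw (sTrans a W) w := by simp only [blw, if_pos h]

lemma blw_cons_off {W a : ℕ} (w : List ℕ) (h : ¬(W = a ∨ W = a + 1)) :
    blw W (a :: w) = (if W < a then 1 else 0) + blw W w := by
  simp only [blw, if_neg h]
  split_ifs <;> omega

lemma ctr_append (W : ℕ) (x y : List ℕ) :
    ctr W (x ++ y) = ctr W x ++ ctr (traj W x) y := by
  induction x generalizing W with
  | nil => simp
  | cons a x ih =>
    by_cases h : W = a ∨ W = a + 1
    · rw [List.cons_append, ctr_cons_on _ h, ctr_cons_on _ h, traj_cons, ih]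
    · have hfix : sTrans a W = W :=
        sTrans_fix (fun hh => h (Or.inl hh)) (fun hh => h (Or.inr hh))
      rw [List.cons_append, ctr_cons_off _ h, ctr_cons_off _ h, traj_cons, hfix, ih,
        List.cons_append]

lemma blw_append (W : ℕ) (x y : List ℕ) :
    blw W (x ++ y) = blw W x + blw (traj W x) y := by
  induction x generalizing W with
  | nil => simp
  | cons a x ih =>
    by_cases h : W = a ∨ W = a + 1
    · rw [List.cons_append, blw_cons_on _ h, blw_cons_on _ h, traj_cons, ih]
    · have hfix : sTrans a W = W :=
        sTrans_fix (fun hh => h (Or.inl hh)) (fun hh => h (Or.inr hh))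
      rw [List.cons_append, blw_cons_off _ h, blw_cons_off _ h, traj_cons, hfix, ih]
      omega

lemma ctr_keep {W : ℕ} {x : List ℕ} (h : ∀ a ∈ x, a + 1 < W) :
    ctr W x = x ∧ traj W x = W ∧ blw W x = 0 := by
  induction x with
  | nil => simp
  | cons a x ih =>
    have ha := h a (by simp)
    have hcond : ¬(W = a ∨ W = a + 1) := by omega
    have ih' := ih (fun b hb => h b (by simp [hb]))
    have hfix : sTrans a W = W :=
      sTrans_fix (fun hh => hcond (Or.inl hh)) (fun hh => hcond (Or.inr hh))
    refine ⟨?_, ?_, ?_⟩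
    · rw [ctr_cons_off _ hcond, if_neg (by omega), ih'.1]
    · rw [traj_cons, hfix, ih'.2.1]
    · rw [blw_cons_off _ hcond, if_neg (by omega), ih'.2.2]

lemma ctr_sub {W : ℕ} {x : List ℕ} (h : ∀ a ∈ x, W < a) :
    ctr W x = x.map (· - 1) ∧ traj W x = W ∧ blw W x = x.length := by
  induction x with
  | nil => simp
  | cons a x ih =>
    have ha := h a (by simp)
    have hcond : ¬(W = a ∨ W = a + 1) := by omega
    have ih' := ih (fun b hb => h b (by simp [hb]))
    have hfix : sTrans a W = W :=
      sTrans_fix (fun hh => hcond (Or.inl hh)) (fun hh => hcond (Or.inr hh))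
    refine ⟨?_, ?_, ?_⟩
    · rw [ctr_cons_off _ hcond, if_pos ha, ih'.1, List.map_cons]
    · rw [traj_cons, hfix, ih'.2.1]
    · rw [blw_cons_off _ hcond, if_pos ha, ih'.2.2, List.length_cons]
      omega

lemma ctr_descRun {d k : ℕ} (hk : k ≤ d) :
    ctr (d + 1) (descRun d k) = [] ∧ traj (d + 1) (descRun d k) = d + 1 - k ∧
      blw (d + 1) (descRun d k) = 0 := by
  induction k generalizing d with
  | zero => simp [descRun]
  | succ k ih =>
    have hcond : d + 1 = d ∨ d + 1 = d + 1 := Or.inr rfl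
    have hst : sTrans d (d + 1) = d := by
      rw [sTrans_apply]; split_ifs <;> omega
    have ih' := ih (d := d - 1) (by omega)
    have hd : d - 1 + 1 = d := by omega
    rw [hd] at ih'
    refine ⟨?_, ?_, ?_⟩
    · show ctr (d + 1) (d :: descRun (d - 1) k) = []
      rw [ctr_cons_on _ hcond, hst, ih'.1]
    · show traj (d + 1) (d :: descRun (d - 1) k) = d + 1 - (k + 1)
      rw [traj_cons, hst, ih'.2.1]
      omega
    · show blw (d + 1) (d :: descRun (d - 1) k) = 0
      rw [blw_cons_on _ hcond, hst, ih'.2.2]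

lemma ctr_ascRun (e k : ℕ) (he : 1 ≤ e) :
    ctr e (ascRun e k) = [] ∧ traj e (ascRun e k) = e + k ∧ blw e (ascRun e k) = 0 := by
  induction k generalizing e with
  | zero => simp [ascRun]
  | succ k ih =>
    have hcond : e = e ∨ e = e + 1 := Or.inl rfl
    have hst : sTrans e e = e + 1 := by
      rw [sTrans_apply]; split_ifs <;> omega
    have ih' := ih (e + 1) (by omega)
    refine ⟨?_, ?_, ?_⟩
    · show ctr e (e :: ascRun (e + 1) k) = []
      rw [ctr_cons_on _ hcond, hst, ih'.1]
    · show traj e (e :: ascRun (e + 1) k) = e + (k + 1)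
      rw [traj_cons, hst, ih'.2.1]
      omega
    · show blw e (e :: ascRun (e + 1) k) = 0
      rw [blw_cons_on _ hcond, hst, ih'.2.2]

lemma ctr_swap_core {W a b : ℕ} (v : List ℕ) (hab : a + 1 < b ∨ b + 1 < a)
    (hW : W = a ∨ W = a + 1) :
    ctr W (a :: b :: v) = ctr W (b :: a :: v) ∧ blw W (a :: b :: v) = blw W (b :: a :: v) := by
  have hWb : ¬(W = b ∨ W = b + 1) := by omega
  have hsa : sTrans a W = a ∨ sTrans a W = a + 1 := by
    rw [sTrans_apply]; split_ifs <;> omega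
  have hsab : ¬(sTrans a W = b ∨ sTrans a W = b + 1) := by omega
  have hfixb : sTrans b W = W :=
    sTrans_fix (fun hh => hWb (Or.inl hh)) (fun hh => hWb (Or.inr hh))
  have hiff : (sTrans a W < b ↔ W < b) := by
    constructor <;> intro <;> omega
  constructor
  · rw [ctr_cons_on _ hW, ctr_cons_off _ hsab, ctr_cons_off _ hWb, ctr_cons_on _ hW,
      if_congr hiff rfl rfl]
  · rw [blw_cons_on _ hW, blw_cons_off _ hsab, blw_cons_off _ hWb, blw_cons_on _ hW,
      if_congr hiff rfl rfl]

lemma ctr_step {w w' : List ℕ} (h : TwoMoveStep w w') (W : ℕ) :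
    TwoMoveEquiv (ctr W w) (ctr W w') ∧ blw W w = blw W w' := by
  obtain ⟨u, v, a, b, hab, rfl, rfl⟩ := h
  induction u generalizing W with
  | nil =>
    simp only [List.nil_append]
    by_cases hWa : W = a ∨ W = a + 1
    · have hc := ctr_swap_core v hab hWa
      rw [hc.1, hc.2]
      exact ⟨TwoMoveEquiv.refl _, rfl⟩
    · by_cases hWb : W = b ∨ W = b + 1
      · have hc := ctr_swap_core v (Or.symm hab) hWb
        rw [hc.1, hc.2]
        exact ⟨TwoMoveEquiv.refl _, rfl⟩
      · have e1 : ctr W (a :: b :: v)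
            = (if W < a then a - 1 else a) :: (if W < b then b - 1 else b) :: ctr W v := by
          rw [ctr_cons_off _ hWa, ctr_cons_off _ hWb]
        have e2 : ctr W (b :: a :: v)
            = (if W < b then b - 1 else b) :: (if W < a then a - 1 else a) :: ctr W v := by
          rw [ctr_cons_off _ hWb, ctr_cons_off _ hWa]
        constructor
        · rw [e1, e2]
          apply Relation.ReflTransGen.single
          refine ⟨[], ctr W v, _, _, ?_, rfl, rfl⟩
          split_ifs <;> omega
        · rw [blw_cons_off _ hWa, blw_cons_off _ hWb, blw_cons_off _ hWb, blw_cons_off _ hWa]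
          omega
  | cons c u ih =>
    simp only [List.cons_append]
    by_cases hWc : W = c ∨ W = c + 1
    · rw [ctr_cons_on _ hWc, ctr_cons_on _ hWc, blw_cons_on _ hWc, blw_cons_on _ hWc]
      exact ih (sTrans c W)
    · rw [ctr_cons_off _ hWc, ctr_cons_off _ hWc, blw_cons_off _ hWc, blw_cons_off _ hWc]
      have := ih W
      exact ⟨this.1.consCongr _, by omega⟩

lemma ctr_equiv {w w' : List ℕ} (h : TwoMoveEquiv w w') (W : ℕ) :
    TwoMoveEquiv (ctr W w) (ctr W w') ∧ blw W w = blw W w' := by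
  induction h with
  | refl => exact ⟨TwoMoveEquiv.refl _, rfl⟩
  | tail _ h2 ih =>
    have hs := ctr_step h2 W
    exact ⟨ih.1.trans hs.1, ih.2.trans hs.2⟩

/-! ### structure of decompositions -/

lemma TwoMoveEquiv.isReduced {m : ℕ} {w w' : List ℕ} (h : TwoMoveEquiv w w')
    (hw : IsReduced m w) : IsReduced m w' := by
  obtain ⟨h1, h2, h3⟩ := hw
  refine ⟨?_, ?_, ?_⟩
  · rw [← h.perm.length_eq]; exact h1
  · intro a ha; exact h2 a (h.perm.mem_iff.2 ha)
  · rw [← h.prod_eq]; exact h3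

lemma ascRun_split (e k1 k2 : ℕ) :
    ascRun e (k1 + k2) = ascRun e k1 ++ ascRun (e + k1) k2 := by
  induction k1 generalizing e with
  | zero => simp [ascRun]
  | succ k1 ih =>
    have h : k1 + 1 + k2 = (k1 + k2) + 1 := by omega
    have h2 : e + (k1 + 1) = (e + 1) + k1 := by omega
    simp only [h, ascRun, ih (e + 1), List.cons_append, h2]

lemma reduced_letters {m : ℕ} {w : List ℕ} (hw : IsReduced m w) :
    ∀ a ∈ w, 1 ≤ a ∧ a + 1 ≤ m + 1 := fun a ha => by
  have := hw.2.1 a ha; omega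

lemma descRun_peel {m C : ℕ} (hC1 : 1 ≤ C) (hC2 : C ≤ m) :
    descWord m = descRun m (m - C) ++ (C :: descRun (C - 1) (C - 1)) := by
  rw [descWord_eq]
  have h1 : m = (m - C) + C := by omega
  rw [show descRun m m = descRun m ((m - C) + C) by rw [← h1], descRun_split]
  congr 1
  have h2 : m - (m - C) = C := by omega
  rw [h2]
  obtain ⟨C', rfl⟩ : ∃ C', C = C' + 1 := ⟨C - 1, by omega⟩
  simp [descRun]

lemma ascRun_peel {m C : ℕ} (hC1 : 2 ≤ C) (hC2 : C ≤ m + 1) :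
    ascWord m = ascRun 1 (C - 2) ++ ((C - 1) :: ascRun C (m - (C - 1))) := by
  rw [ascWord_eq]
  have h1 : m = (C - 2) + (m - (C - 2)) := by omega
  rw [show ascRun 1 m = ascRun 1 ((C - 2) + (m - (C - 2))) by rw [← h1], ascRun_split]
  congr 1
  have h2 : 1 + (C - 2) = C - 1 := by omega
  rw [h2]
  obtain ⟨k', hk'⟩ : ∃ k', m - (C - 2) = k' + 1 := ⟨m - (C - 2) - 1, by omega⟩
  rw [hk']
  show ascRun (C - 1) (k' + 1) = (C - 1) :: ascRun C (m - (C - 1))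
  have h3 : (C - 1) + 1 = C := by omega
  have h4 : k' = m - (C - 1) := by omega
  simp [ascRun, h3, h4]

lemma structD {m : ℕ} {u v : List ℕ} (hm : 1 ≤ m) (h : IsReduced m (u ++ descWord m ++ v)) :
    (∀ a ∈ u, 1 ≤ a ∧ a + 1 ≤ m) ∧ (∀ a ∈ v, 2 ≤ a ∧ a ≤ m) ∧ traj (m + 1) u = m + 1 := by
  have hwlet : ∀ a ∈ u ++ descWord m ++ v, 1 ≤ a ∧ a + 1 ≤ m + 1 := reduced_letters h
  have hulet : ∀ a ∈ u, 1 ≤ a ∧ a + 1 ≤ m + 1 := by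
    intro a ha; apply hwlet; simp [ha]
  have hvlet : ∀ a ∈ v, 1 ≤ a ∧ a + 1 ≤ m + 1 := by
    intro a ha; apply hwlet; simp [ha]
  have hubnd := traj_bound hulet (W := m + 1) ⟨by omega, le_refl _⟩
  have hC : traj (m + 1) u = m + 1 := by
    by_contra hne
    have hC2 : traj (m + 1) u ≤ m := by omega
    have hC1 : 1 ≤ traj (m + 1) u := hubnd.1
    have hsplit := descRun_peel hC1 hC2
    have hweq : u ++ descWord m ++ v = (u ++ descRun m (m - traj (m + 1) u)) ++
        (traj (m + 1) u) :: (descRun (traj (m + 1) u - 1) (traj (m + 1) u - 1) ++ v) := by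
      rw [hsplit]
      simp [List.append_assoc]
    have htr : traj (m + 1) (u ++ descRun m (m - traj (m + 1) u)) = traj (m + 1) u := by
      rw [traj_append]
      apply traj_fix
      intro a ha
      have := mem_descRun (by omega) ha
      omega
    have hstep := traj_step_le h hweq
    rw [htr] at hstep
    rw [sTrans_apply] at hstep
    split_ifs at hstep <;> omega
  refine ⟨?_, ?_, hC⟩
  · intro a ha
    obtain ⟨u₁, u₂, rfl⟩ := List.append_of_mem ha
    have hu₁let : ∀ b ∈ u₁ ++ [a], 1 ≤ b ∧ b + 1 ≤ m + 1 := by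
      intro b hb
      apply hulet
      simp only [List.mem_append, List.mem_singleton] at hb
      simp only [List.mem_append, List.mem_cons]
      tauto
    have h1 : traj (m + 1) u₁ = m + 1 := by
      have hle := traj_prefix_le h (a :: u₂) u₁ (descWord m ++ v)
        (by simp [List.append_assoc])
      have hb := traj_bound (w := u₁) (fun b hb => hulet b (by simp [hb])) (W := m + 1)
        ⟨by omega, le_refl _⟩
      rw [hC] at hle
      omega
    have h2 : traj (m + 1) ((u₁ ++ [a]) ++ u₂) = m + 1 := by
      rw [show (u₁ ++ [a]) ++ u₂ = u₁ ++ a :: u₂ by simp]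
      exact hC
    have h3 := traj_prefix_le h u₂ (u₁ ++ [a]) (descWord m ++ v)
      (by simp [List.append_assoc])
    have h4 : traj (m + 1) (u₁ ++ [a]) = sTrans a (m + 1) := by
      rw [traj_append, h1, traj_singleton]
    have hb2 := traj_bound hu₁let (W := m + 1) ⟨by omega, le_refl _⟩
    rw [h4] at h3 hb2
    rw [h2] at h3
    have h5 : sTrans a (m + 1) = m + 1 := by omega
    have ha' := hulet a (by simp)
    rw [sTrans_apply] at h5
    split_ifs at h5 <;> omega
  · intro a ha
    obtain ⟨v₁, v₂, rfl⟩ := List.append_of_mem ha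
    have htr1 : traj (m + 1) (u ++ descWord m) = 1 := by
      rw [traj_append, hC, descWord_eq]
      have := (ctr_descRun (le_refl m)).2.1
      rw [this]
      omega
    have hxlet : ∀ b ∈ (u ++ descWord m) ++ v₁, 1 ≤ b ∧ b + 1 ≤ m + 1 := by
      intro b hb
      apply hwlet
      simp only [List.mem_append, List.mem_cons] at hb ⊢
      tauto
    have h1 : traj (m + 1) ((u ++ descWord m) ++ v₁) = 1 := by
      have hle := traj_prefix_le h v₁ (u ++ descWord m) (a :: v₂)
        (by simp [List.append_assoc])
      have hb := traj_bound hxlet (W := m + 1) ⟨by omega, le_refl _⟩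
      rw [htr1] at hle
      omega
    have hstep := traj_step_le h
      (show u ++ descWord m ++ (v₁ ++ a :: v₂) = ((u ++ descWord m) ++ v₁) ++ a :: v₂
        by simp [List.append_assoc])
    rw [h1] at hstep
    have ha' := hvlet a (by simp)
    have hb1 : 1 ≤ sTrans a 1 := by
      rw [sTrans_apply]; split_ifs <;> omega
    have h5 : sTrans a 1 = 1 := by omega
    rw [sTrans_apply] at h5
    split_ifs at h5 <;> omega

lemma structA {m : ℕ} {u v : List ℕ} (hm : 1 ≤ m) (h : IsReduced m (u ++ ascWord m ++ v)) :
    (∀ a ∈ u, 2 ≤ a ∧ a ≤ m) ∧ (∀ a ∈ v, 1 ≤ a ∧ a + 1 ≤ m) ∧ traj 1 u = 1 := by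
  have hwlet : ∀ a ∈ u ++ ascWord m ++ v, 1 ≤ a ∧ a + 1 ≤ m + 1 := reduced_letters h
  have hulet : ∀ a ∈ u, 1 ≤ a ∧ a + 1 ≤ m + 1 := by
    intro a ha; apply hwlet; simp [ha]
  have hvlet : ∀ a ∈ v, 1 ≤ a ∧ a + 1 ≤ m + 1 := by
    intro a ha; apply hwlet; simp [ha]
  have hubnd := traj_bound hulet (W := 1) ⟨le_refl _, by omega⟩
  have hC : traj 1 u = 1 := by
    by_contra hne
    have hC1 : 2 ≤ traj 1 u := by omega
    have hC2 : traj 1 u ≤ m + 1 := hubnd.2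
    have hsplit := ascRun_peel hC1 hC2
    have hweq : u ++ ascWord m ++ v = (u ++ ascRun 1 (traj 1 u - 2)) ++
        (traj 1 u - 1) :: (ascRun (traj 1 u) (m - (traj 1 u - 1)) ++ v) := by
      rw [hsplit]
      simp [List.append_assoc]
    have htr : traj 1 (u ++ ascRun 1 (traj 1 u - 2)) = traj 1 u := by
      rw [traj_append]
      apply traj_fix
      intro a ha
      have := mem_ascRun ha
      omega
    have hstep := traj_step_ge h hweq
    rw [htr] at hstep
    rw [sTrans_apply] at hstep
    split_ifs at hstep <;> omega
  refine ⟨?_, ?_, hC⟩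
  · intro a ha
    obtain ⟨u₁, u₂, rfl⟩ := List.append_of_mem ha
    have hu₁let : ∀ b ∈ u₁ ++ [a], 1 ≤ b ∧ b + 1 ≤ m + 1 := by
      intro b hb
      apply hulet
      simp only [List.mem_append, List.mem_singleton] at hb
      simp only [List.mem_append, List.mem_cons]
      tauto
    have h1 : traj 1 u₁ = 1 := by
      have hle := traj_prefix_ge h (a :: u₂) u₁ (ascWord m ++ v)
        (by simp [List.append_assoc])
      have hb := traj_bound (w := u₁) (fun b hb => hulet b (by simp [hb])) (W := 1)
        ⟨le_refl _, by omega⟩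
      rw [hC] at hle
      omega
    have h2 : traj 1 ((u₁ ++ [a]) ++ u₂) = 1 := by
      rw [show (u₁ ++ [a]) ++ u₂ = u₁ ++ a :: u₂ by simp]
      exact hC
    have h3 := traj_prefix_ge h u₂ (u₁ ++ [a]) (ascWord m ++ v)
      (by simp [List.append_assoc])
    have h4 : traj 1 (u₁ ++ [a]) = sTrans a 1 := by
      rw [traj_append, h1, traj_singleton]
    have hb2 := traj_bound hu₁let (W := 1) ⟨le_refl _, by omega⟩
    rw [h4] at h3 hb2
    rw [h2] at h3
    have h5 : sTrans a 1 = 1 := by omega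
    have ha' := hulet a (by simp)
    rw [sTrans_apply] at h5
    split_ifs at h5 <;> omega
  · intro a ha
    obtain ⟨v₁, v₂, rfl⟩ := List.append_of_mem ha
    have htr1 : traj 1 (u ++ ascWord m) = m + 1 := by
      rw [traj_append, hC, ascWord_eq]
      have := (ctr_ascRun 1 m (le_refl 1)).2.1
      rw [this]
      omega
    have hxlet : ∀ b ∈ (u ++ ascWord m) ++ v₁, 1 ≤ b ∧ b + 1 ≤ m + 1 := by
      intro b hb
      apply hwlet
      simp only [List.mem_append, List.mem_cons] at hb ⊢
      tauto
    have h1 : traj 1 ((u ++ ascWord m) ++ v₁) = m + 1 := by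
      have hle := traj_prefix_ge h v₁ (u ++ ascWord m) (a :: v₂)
        (by simp [List.append_assoc])
      have hb := traj_bound hxlet (W := 1) ⟨le_refl _, by omega⟩
      rw [htr1] at hle
      omega
    have hstep := traj_step_ge h
      (show u ++ ascWord m ++ (v₁ ++ a :: v₂) = ((u ++ ascWord m) ++ v₁) ++ a :: v₂
        by simp [List.append_assoc])
    rw [h1] at hstep
    have ha' := hvlet a (by simp)
    have hb1 : sTrans a (m + 1) ≤ m + 1 := by
      rw [sTrans_apply]; split_ifs <;> omega
    have h5 : sTrans a (m + 1) = m + 1 := by omega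
    rw [sTrans_apply] at h5
    split_ifs at h5 <;> omega

/-! ### decompositions determine the contraction -/

lemma ctrD_decomp {m : ℕ} {u v : List ℕ} (hm : 1 ≤ m) (h : IsReduced m (u ++ descWord m ++ v)) :
    ctr (m + 1) (u ++ descWord m ++ v) = u ++ v.map (· - 1) ∧
      blw (m + 1) (u ++ descWord m ++ v) = v.length := by
  obtain ⟨hu, hv, hC⟩ := structD hm h
  have hku := ctr_keep (W := m + 1) (x := u) (fun a ha => by have := hu a ha; omega)
  have hblock := ctr_descRun (d := m) (k := m) (le_refl m)
  have hsv := ctr_sub (W := 1) (x := v) (fun a ha => by have := hv a ha; omega)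
  have e1 : traj (m + 1) (u ++ descWord m) = 1 := by
    rw [traj_append, hku.2.1, descWord_eq, hblock.2.1]
    omega
  constructor
  · rw [ctr_append, ctr_append, hku.1, hku.2.1, descWord_eq, hblock.1, ← descWord_eq, e1,
      hsv.1, List.append_nil]
  · rw [blw_append, blw_append, hku.2.2, hku.2.1, descWord_eq, hblock.2.2, ← descWord_eq, e1,
      hsv.2.2]
    omega

lemma ctrA_decomp {m : ℕ} {u v : List ℕ} (hm : 1 ≤ m) (h : IsReduced m (u ++ ascWord m ++ v)) :
    ctr 1 (u ++ ascWord m ++ v) = u.map (· - 1) ++ v ∧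
      blw 1 (u ++ ascWord m ++ v) = u.length := by
  obtain ⟨hu, hv, hC⟩ := structA hm h
  have hku := ctr_sub (W := 1) (x := u) (fun a ha => by have := hu a ha; omega)
  have hblock := ctr_ascRun 1 m (le_refl 1)
  have hsv := ctr_keep (W := m + 1) (x := v) (fun a ha => by have := hv a ha; omega)
  have e1 : traj 1 (u ++ ascWord m) = m + 1 := by
    rw [traj_append, hku.2.1, ascWord_eq, hblock.2.1]
    omega
  constructor
  · rw [ctr_append, ctr_append, hku.1, hku.2.1, ascWord_eq, hblock.1, ← ascWord_eq, e1,
      hsv.1, List.append_nil]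
  · rw [blw_append, blw_append, hku.2.2, hku.2.1, ascWord_eq, hblock.2.2, ← ascWord_eq, e1,
      hsv.2.2]
    omega

lemma exists_first {γ : ℕ} {v : List ℕ} (hv : traj γ v ≠ γ) :
    ∃ x b y, v = x ++ b :: y ∧ (∀ a ∈ x, a ≠ γ ∧ a + 1 ≠ γ) ∧ (b = γ ∨ b + 1 = γ) := by
  induction v with
  | nil => exact absurd rfl hv
  | cons a v ih =>
    by_cases ha : a = γ ∨ a + 1 = γ
    · exact ⟨[], a, v, rfl, by simp, ha⟩
    · push_neg at ha
      have hfix : sTrans a γ = γ := sTrans_fix (Ne.symm ha.1) (Ne.symm ha.2)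
      rw [traj_cons, hfix] at hv
      obtain ⟨x, b, y, rfl, hx, hb⟩ := ih hv
      refine ⟨a :: x, b, y, rfl, ?_, hb⟩
      intro c hc
      rcases List.mem_cons.1 hc with rfl | hc
      · exact ha
      · exact hx c hc

lemma equiv_congr {w₁ w₂ w₁' w₂' : List ℕ} (e1 : w₁ = w₁') (e2 : w₂ = w₂')
    (h : TwoMoveEquiv w₁' w₂') : TwoMoveEquiv w₁ w₂ := by
  rw [e1, e2]; exact h

/-! ### gathering the block -/

lemma traj_whole_D {m : ℕ} {w : List ℕ} (hm : 1 ≤ m) (hw : IsReduced m w) :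
    traj (m + 1) w = 1 := by
  rw [traj_eq_symm, hw.2.2]
  have h : longestPerm m 1 = m + 1 := by
    rw [longestPerm_apply]; split_ifs <;> omega
  rw [← h, Equiv.symm_apply_apply]

lemma traj_whole_A {m : ℕ} {w : List ℕ} (hw : IsReduced m w) :
    traj 1 w = m + 1 := by
  rw [traj_eq_symm, hw.2.2]
  have h : longestPerm m (m + 1) = 1 := by
    rw [longestPerm_apply]; split_ifs <;> omega
  rw [Equiv.symm_apply_eq]
  exact h.symm

lemma gatherD {m : ℕ} {w : List ℕ} (hm : 1 ≤ m) (hw : IsReduced m w) :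
    ∃ u v, TwoMoveEquiv w (u ++ descWord m ++ v) := by
  have main : ∀ k, 1 ≤ k → k ≤ m →
      ∃ u v, TwoMoveEquiv w (u ++ descRun m k ++ v) ∧ ∀ a ∈ u, 1 ≤ a ∧ a + 1 ≤ m := by
    intro k
    induction k with
    | zero => omega
    | succ k ih =>
      intro _ hk1
      rcases Nat.eq_zero_or_pos k with rfl | hk0
      · -- base : find the first crossing of wire m+1
        have hv : traj (m + 1) w ≠ m + 1 := by
          rw [traj_whole_D hm hw]; omega
        obtain ⟨x, b, y, hsplit, hx, hb⟩ := exists_first hv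
        have hbmem : 1 ≤ b ∧ b ≤ m := hw.2.1 b (by rw [hsplit]; simp)
        have hbm : b = m := by omega
        refine ⟨x, y, ?_, ?_⟩
        · refine equiv_congr rfl ?_ (TwoMoveEquiv.refl w)
          rw [hsplit, hbm]
          show x ++ descRun m 1 ++ y = x ++ m :: y
          simp [descRun]
        · intro a ha
          have h1 := hw.2.1 a (by rw [hsplit]; simp [ha])
          have h2 := hx a ha
          omega
      · -- inductive step
        obtain ⟨u, v, hequiv, hu⟩ := ih (by omega) (by omega)
        have hred' : IsReduced m (u ++ descRun m k ++ v) := hequiv.isReduced hw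
        have hklem : k ≤ m := by omega
        have htru : traj (m + 1) u = m + 1 :=
          traj_fix (fun a ha => by have := hu a ha; omega)
        have htrb : traj (m + 1) (descRun m k) = m + 1 - k := (ctr_descRun hklem).2.1
        have htrP : traj (m + 1) (u ++ descRun m k) = m + 1 - k := by
          rw [traj_append, htru, htrb]
        have htrv : traj (m + 1 - k) v = 1 := by
          have hwhole := traj_whole_D hm hred'
          rw [traj_append, htrP] at hwhole
          exact hwhole
        have hγ : 2 ≤ m + 1 - k := by omega
        obtain ⟨x, b, y, hvsplit, hx, hb⟩ := exists_first (γ := m + 1 - k)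
          (v := v) (by omega)
        -- the crossing letter must be m - k
        have hbval : b = m - k := by
          rcases hb with hbγ | hbγ
          · exfalso
            have htrx : traj (m + 1) ((u ++ descRun m k) ++ x) = m + 1 - k := by
              rw [traj_append, htrP]
              exact traj_fix (fun a ha => (hx a ha))
            have hstep := traj_step_le hred'
              (show u ++ descRun m k ++ v = ((u ++ descRun m k) ++ x) ++ b :: y by
                rw [hvsplit]; simp [List.append_assoc])
            rw [htrx, hbγ] at hstep
            rw [sTrans_apply] at hstep
            split_ifs at hstep <;> omega
          · omega
        have hxprop : ∀ a ∈ x, a ≠ m + 1 - k ∧ a + 1 ≠ m + 1 - k := hx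
        set p : ℕ → Bool := fun a => decide (a < b) with hp
        have hxsplit2 : ∀ a ∈ x, (a < b) ∨ (b + 2 ≤ a) := by
          intro a ha
          have := hx a ha
          omega
        have hmemlo : ∀ a ∈ x.filter p, a < b := by
          intro a ha
          have := List.mem_filter.1 ha
          simpa [hp] using this.2
        have hmemhi : ∀ a ∈ x.filter (fun a => ! p a), b + 2 ≤ a := by
          intro a ha
          have h1 := List.mem_filter.1 ha
          have h2 : ¬ (a < b) := by simpa [hp] using h1.2
          have := hxsplit2 a h1.1
          omega
        have E1 : TwoMoveEquiv x (x.filter p ++ x.filter (fun a => ! p a)) := by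
          apply equiv_filter_split
          intro a ha c hc hpa hpc
          have h1 : a < b := by simpa [hp] using hpa
          have h2 : ¬ (c < b) := by simpa [hp] using hpc
          have := hxsplit2 c hc
          left; omega
        have E2 : TwoMoveEquiv (descRun m k ++ x.filter p) (x.filter p ++ descRun m k) := by
          apply equiv_blocks_swap
          intro c hc a ha
          have h1 := mem_descRun hklem hc
          have h2 := hmemlo a ha
          right; omega
        have E3 : TwoMoveEquiv (x.filter (fun a => ! p a) ++ [b]) (b :: x.filter (fun a => ! p a)) := by
          refine (equiv_cons_to_append ?_).symm
          intro c hc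
          have := hmemhi c hc
          left; omega
        refine ⟨u ++ x.filter p, x.filter (fun a => ! p a) ++ y, ?_, ?_⟩
        · have step0 : TwoMoveEquiv w ((u ++ descRun m k) ++ (x ++ b :: y)) :=
            equiv_congr rfl (by rw [hvsplit]) hequiv
          have step1 : TwoMoveEquiv ((u ++ descRun m k) ++ (x ++ b :: y))
              ((u ++ descRun m k) ++ ((x.filter p ++ x.filter (fun a => ! p a)) ++ b :: y)) :=
            (E1.congrRight (b :: y)).congrLeft (u ++ descRun m k)
          have step2 : TwoMoveEquiv
              (u ++ ((descRun m k ++ x.filter p) ++ (x.filter (fun a => ! p a) ++ b :: y)))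
              (u ++ ((x.filter p ++ descRun m k) ++ (x.filter (fun a => ! p a) ++ b :: y))) :=
            (E2.congrRight (x.filter (fun a => ! p a) ++ b :: y)).congrLeft u
          have step3 : TwoMoveEquiv
              ((u ++ x.filter p) ++ (descRun m k ++ ((x.filter (fun a => ! p a) ++ [b]) ++ y)))
              ((u ++ x.filter p) ++ (descRun m k ++ ((b :: x.filter (fun a => ! p a)) ++ y))) :=
            ((E3.congrRight y).congrLeft (descRun m k)).congrLeft (u ++ x.filter p)
          have eqA : u ++ descRun m k ++ (x.filter p ++ x.filter (fun a => ! p a) ++ b :: y)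
              = u ++ (descRun m k ++ x.filter p ++ (x.filter (fun a => ! p a) ++ b :: y)) := by
            simp [List.append_assoc]
          have eqB : u ++ (x.filter p ++ descRun m k ++ (x.filter (fun a => ! p a) ++ b :: y))
              = u ++ x.filter p ++ (descRun m k ++ (x.filter (fun a => ! p a) ++ [b] ++ y)) := by
            simp [List.append_assoc]
          have eqC : u ++ x.filter p ++ descRun m (k + 1) ++ (x.filter (fun a => ! p a) ++ y)
              = u ++ x.filter p ++ (descRun m k ++ (b :: x.filter (fun a => ! p a) ++ y)) := by
            rw [← descRun_append, ← hbval]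
            simp [List.append_assoc]
          have c1 := step0.trans step1
          have c2 := c1.trans (equiv_congr eqA rfl step2)
          have c3 := c2.trans (equiv_congr eqB rfl step3)
          exact equiv_congr rfl eqC c3
        · intro a ha
          rcases List.mem_append.1 ha with h1 | h1
          · exact hu a h1
          · have h2 := hmemlo a h1
            have h3 : a ∈ u ++ descRun m k ++ v := by
              rw [hvsplit]
              have := (List.mem_filter.1 h1).1
              simp [this]
            have := hred'.2.1 a h3
            omega
  obtain ⟨u, v, hq, -⟩ := main m hm (le_refl m)
  rw [← descWord_eq] at hq
  exact ⟨u, v, hq⟩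

lemma gatherA {m : ℕ} {w : List ℕ} (hm : 1 ≤ m) (hw : IsReduced m w) :
    ∃ u v, TwoMoveEquiv w (u ++ ascWord m ++ v) := by
  have main : ∀ k, 1 ≤ k → k ≤ m →
      ∃ u v, TwoMoveEquiv w (u ++ ascRun 1 k ++ v) ∧ ∀ a ∈ u, 2 ≤ a ∧ a ≤ m := by
    intro k
    induction k with
    | zero => omega
    | succ k ih =>
      intro _ hk1
      rcases Nat.eq_zero_or_pos k with rfl | hk0
      · have hv : traj 1 w ≠ 1 := by
          rw [traj_whole_A hw]; omega
        obtain ⟨x, b, y, hsplit, hx, hb⟩ := exists_first hv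
        have hbmem : 1 ≤ b ∧ b ≤ m := hw.2.1 b (by rw [hsplit]; simp)
        have hbm : b = 1 := by omega
        refine ⟨x, y, ?_, ?_⟩
        · refine equiv_congr rfl ?_ (TwoMoveEquiv.refl w)
          rw [hsplit, hbm]
          show x ++ ascRun 1 1 ++ y = x ++ 1 :: y
          simp [ascRun]
        · intro a ha
          have h1 := hw.2.1 a (by rw [hsplit]; simp [ha])
          have h2 := hx a ha
          omega
      · obtain ⟨u, v, hequiv, hu⟩ := ih (by omega) (by omega)
        have hred' : IsReduced m (u ++ ascRun 1 k ++ v) := hequiv.isReduced hw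
        have htru : traj 1 u = 1 :=
          traj_fix (fun a ha => by have := hu a ha; omega)
        have htrb : traj 1 (ascRun 1 k) = 1 + k := (ctr_ascRun 1 k (le_refl 1)).2.1
        have htrP : traj 1 (u ++ ascRun 1 k) = 1 + k := by
          rw [traj_append, htru, htrb]
        have htrv : traj (1 + k) v = m + 1 := by
          have hwhole := traj_whole_A hred'
          rw [traj_append, htrP] at hwhole
          exact hwhole
        obtain ⟨x, b, y, hvsplit, hx, hb⟩ := exists_first (γ := 1 + k)
          (v := v) (by omega)
        have hbval : b = k + 1 := by
          rcases hb with hbγ | hbγ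
          · omega
          · exfalso
            have htrx : traj 1 ((u ++ ascRun 1 k) ++ x) = 1 + k := by
              rw [traj_append, htrP]
              exact traj_fix (fun a ha => (hx a ha))
            have hstep := traj_step_ge hred'
              (show u ++ ascRun 1 k ++ v = ((u ++ ascRun 1 k) ++ x) ++ b :: y by
                rw [hvsplit]; simp [List.append_assoc])
            rw [htrx] at hstep
            rw [sTrans_apply] at hstep
            split_ifs at hstep <;> omega
        set p : ℕ → Bool := fun a => decide (b < a) with hp
        have hxsplit2 : ∀ a ∈ x, (b + 1 ≤ a) ∨ (a + 2 ≤ b) := by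
          intro a ha
          have := hx a ha
          omega
        have hmemhi : ∀ a ∈ x.filter p, b + 1 ≤ a := by
          intro a ha
          have := List.mem_filter.1 ha
          have h2 : b < a := by simpa [hp] using this.2
          omega
        have hmemlo : ∀ a ∈ x.filter (fun a => ! p a), a + 2 ≤ b := by
          intro a ha
          have h1 := List.mem_filter.1 ha
          have h2 : ¬ (b < a) := by simpa [hp] using h1.2
          have := hxsplit2 a h1.1
          omega
        have E1 : TwoMoveEquiv x (x.filter p ++ x.filter (fun a => ! p a)) := by
          apply equiv_filter_split
          intro a ha c hc hpa hpc
          have h1 : b < a := by simpa [hp] using hpa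
          have h2 : ¬ (b < c) := by simpa [hp] using hpc
          have := hxsplit2 c hc
          right; omega
        have E2 : TwoMoveEquiv (ascRun 1 k ++ x.filter p) (x.filter p ++ ascRun 1 k) := by
          apply equiv_blocks_swap
          intro c hc a ha
          have h1 := mem_ascRun hc
          have h2 := hmemhi a ha
          left; omega
        have E3 : TwoMoveEquiv (x.filter (fun a => ! p a) ++ [b])
            (b :: x.filter (fun a => ! p a)) := by
          refine (equiv_cons_to_append ?_).symm
          intro c hc
          have := hmemlo c hc
          right; omega
        refine ⟨u ++ x.filter p, x.filter (fun a => ! p a) ++ y, ?_, ?_⟩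
        · have step0 : TwoMoveEquiv w ((u ++ ascRun 1 k) ++ (x ++ b :: y)) :=
            equiv_congr rfl (by rw [hvsplit]) hequiv
          have step1 : TwoMoveEquiv ((u ++ ascRun 1 k) ++ (x ++ b :: y))
              ((u ++ ascRun 1 k) ++ ((x.filter p ++ x.filter (fun a => ! p a)) ++ b :: y)) :=
            (E1.congrRight (b :: y)).congrLeft (u ++ ascRun 1 k)
          have step2 : TwoMoveEquiv
              (u ++ ((ascRun 1 k ++ x.filter p) ++ (x.filter (fun a => ! p a) ++ b :: y)))
              (u ++ ((x.filter p ++ ascRun 1 k) ++ (x.filter (fun a => ! p a) ++ b :: y))) :=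
            (E2.congrRight (x.filter (fun a => ! p a) ++ b :: y)).congrLeft u
          have step3 : TwoMoveEquiv
              ((u ++ x.filter p) ++ (ascRun 1 k ++ ((x.filter (fun a => ! p a) ++ [b]) ++ y)))
              ((u ++ x.filter p) ++ (ascRun 1 k ++ ((b :: x.filter (fun a => ! p a)) ++ y))) :=
            ((E3.congrRight y).congrLeft (ascRun 1 k)).congrLeft (u ++ x.filter p)
          have eqA : (u ++ ascRun 1 k) ++ ((x.filter p ++ x.filter (fun a => ! p a)) ++ b :: y)
              = u ++ ((ascRun 1 k ++ x.filter p) ++ (x.filter (fun a => ! p a) ++ b :: y)) := by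
            simp [List.append_assoc]
          have eqB : u ++ ((x.filter p ++ ascRun 1 k) ++ (x.filter (fun a => ! p a) ++ b :: y))
              = (u ++ x.filter p) ++ (ascRun 1 k ++ ((x.filter (fun a => ! p a) ++ [b]) ++ y)) := by
            simp [List.append_assoc]
          have eqC : u ++ x.filter p ++ ascRun 1 (k + 1) ++ (x.filter (fun a => ! p a) ++ y)
              = (u ++ x.filter p) ++ (ascRun 1 k ++ ((b :: x.filter (fun a => ! p a)) ++ y)) := by
            rw [← ascRun_append]
            have hb1 : 1 + k = b := by omega
            rw [hb1]
            simp [List.append_assoc]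
          have c1 := step0.trans step1
          have c2 := c1.trans (equiv_congr eqA rfl step2)
          have c3 := c2.trans (equiv_congr eqB rfl step3)
          exact equiv_congr rfl eqC c3
        · intro a ha
          rcases List.mem_append.1 ha with h1 | h1
          · exact hu a h1
          · have h2 := hmemhi a h1
            have h3 : a ∈ u ++ ascRun 1 k ++ v := by
              rw [hvsplit]
              have := (List.mem_filter.1 h1).1
              simp [this]
            have := hred'.2.1 a h3
            omega
  obtain ⟨u, v, hq, -⟩ := main m hm (le_refl m)
  rw [← ascWord_eq] at hq
  exact ⟨u, v, hq⟩

/-! ### indices, contractions, extensions -/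

lemma indD_char {m : ℕ} (hm : 1 ≤ m) {w u v : List ℕ} (hw : IsReduced m w)
    (hdec : TwoMoveEquiv w (u ++ descWord m ++ v)) : indD m w = v.length := by
  have hval := (ctrD_decomp hm (hdec.isReduced hw)).2
  have hblw := (ctr_equiv hdec (m + 1)).2
  have hset : {s | ∃ u' v' : List ℕ, v'.length = s ∧ TwoMoveEquiv w (u' ++ descWord m ++ v')}
      = {v.length} := by
    ext s
    simp only [Set.mem_setOf_eq, Set.mem_singleton_iff]
    constructor
    · rintro ⟨u', v', rfl, heq⟩
      have h1 := (ctrD_decomp hm (heq.isReduced hw)).2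
      have h2 := (ctr_equiv heq (m + 1)).2
      omega
    · rintro rfl
      exact ⟨u, v, rfl, hdec⟩
  unfold indD
  rw [hset]
  exact csInf_singleton _

lemma indA_char {m : ℕ} (hm : 1 ≤ m) {w u v : List ℕ} (hw : IsReduced m w)
    (hdec : TwoMoveEquiv w (u ++ ascWord m ++ v)) : indA m w = v.length := by
  have hval := (ctrA_decomp hm (hdec.isReduced hw)).2
  have hblw := (ctr_equiv hdec 1).2
  have hlen := hdec.perm.length_eq
  simp only [List.length_append, length_ascWord] at hlen
  have hset : {s | ∃ u' v' : List ℕ, v'.length = s ∧ TwoMoveEquiv w (u' ++ ascWord m ++ v')}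
      = {v.length} := by
    ext s
    simp only [Set.mem_setOf_eq, Set.mem_singleton_iff]
    constructor
    · rintro ⟨u', v', rfl, heq⟩
      have h1 := (ctrA_decomp hm (heq.isReduced hw)).2
      have h2 := (ctr_equiv heq 1).2
      have h3 := heq.perm.length_eq
      simp only [List.length_append, length_ascWord] at h3
      omega
    · rintro rfl
      exact ⟨u, v, rfl, hdec⟩
  unfold indA
  rw [hset]
  exact csInf_singleton _

lemma map_sub_add {v : List ℕ} (hv : ∀ a ∈ v, 1 ≤ a) :
    (v.map (· - 1)).map (· + 1) = v := by
  rw [List.map_map]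
  have : ∀ a ∈ v, ((· + 1) ∘ (· - 1)) a = id a := by
    intro a ha
    have := hv a ha
    simp only [Function.comp_apply, id_eq]
    omega
  rw [List.map_congr_left this, List.map_id]

lemma map_add_sub (v : List ℕ) : (v.map (· + 1)).map (· - 1) = v := by
  rw [List.map_map]
  have : ∀ a ∈ v, ((· - 1) ∘ (· + 1)) a = id a := by
    intro a _
    simp only [Function.comp_apply, id_eq]
    omega
  rw [List.map_congr_left this, List.map_id]

lemma extD_reassemble {n : ℕ} {u v : List ℕ} (hv : ∀ a ∈ v, 1 ≤ a) :
    extD n v.length (u ++ v.map (· - 1)) = u ++ descWord (n + 1) ++ v := by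
  unfold extD
  have hlen : (u ++ v.map (· - 1)).length - v.length = u.length := by simp
  rw [hlen, List.take_left' rfl, List.drop_left' rfl, map_sub_add hv]

lemma extA_reassemble {n : ℕ} {u v : List ℕ} (hu : ∀ a ∈ u, 1 ≤ a) :
    extA n v.length (u.map (· - 1) ++ v) = u ++ ascWord (n + 1) ++ v := by
  unfold extA
  have hlen : (u.map (· - 1) ++ v).length - v.length = (u.map (· - 1)).length := by simp
  rw [hlen, List.take_left' rfl, List.drop_left' rfl, map_sub_add hu]

lemma extD_reduced {n : ℕ} {i : List ℕ} (hi : IsReduced n i) {s : ℕ} (hs : s ≤ Dim n) :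
    IsReduced (n + 1) (extD n s i) := by
  obtain ⟨hlen, hlet, hprod⟩ := hi
  have hdim := dim_succ n
  unfold Dim at hdim
  refine ⟨?_, ?_, ?_⟩
  · unfold extD
    simp only [List.length_append, List.length_take, List.length_drop, List.length_map,
      length_descWord]
    unfold Dim at hs
    omega
  · intro a ha
    unfold extD at ha
    simp only [List.mem_append, List.mem_map] at ha
    rcases ha with (ha | ha) | ⟨b, hb, rfl⟩
    · have := hlet a (List.take_subset _ _ ha); omega
    · have := mem_descWord ha; omega
    · have := hlet b (List.drop_subset _ _ hb); omega
  · unfold extD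
    rw [wordProd_append, wordProd_append]
    have hshift := shiftD (m := n + 1) (x := i.drop (i.length - s))
      (fun a ha => by have := hlet a (List.drop_subset _ _ ha); omega)
    rw [mul_assoc, hshift, ← mul_assoc, ← wordProd_append, List.take_append_drop, hprod,
      ← longest_succ_D]

lemma extA_reduced {n : ℕ} {i : List ℕ} (hi : IsReduced n i) {s : ℕ} (hs : s ≤ Dim n) :
    IsReduced (n + 1) (extA n s i) := by
  obtain ⟨hlen, hlet, hprod⟩ := hi
  have hdim := dim_succ n
  unfold Dim at hdim
  refine ⟨?_, ?_, ?_⟩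
  · unfold extA
    simp only [List.length_append, List.length_take, List.length_drop, List.length_map,
      length_ascWord]
    unfold Dim at hs
    omega
  · intro a ha
    unfold extA at ha
    simp only [List.mem_append, List.mem_map] at ha
    rcases ha with (⟨b, hb, rfl⟩ | ha) | ha
    · have := hlet b (List.take_subset _ _ hb); omega
    · have := mem_ascWord ha; omega
    · have := hlet a (List.drop_subset _ _ ha); omega
  · unfold extA
    rw [wordProd_append, wordProd_append]
    have hshift := shiftA (m := n + 1) (x := i.take (i.length - s))
      (fun a ha => by have := hlet a (List.take_subset _ _ ha); omega)
    rw [hshift, mul_assoc, ← wordProd_append, List.take_append_drop, hprod, ← longest_succ_A]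

lemma extD_ctr {n : ℕ} {i : List ℕ} (hlet : ∀ a ∈ i, 1 ≤ a ∧ a ≤ n) {s : ℕ}
    (hs : s ≤ i.length) :
    ctr (n + 2) (extD n s i) = i ∧ blw (n + 2) (extD n s i) = s := by
  have hku := ctr_keep (W := n + 2) (x := i.take (i.length - s))
    (fun a ha => by have := hlet a (List.take_subset _ _ ha); omega)
  have hblock := ctr_descRun (d := n + 1) (k := n + 1) (le_refl _)
  have hsv := ctr_sub (W := 1) (x := (i.drop (i.length - s)).map (· + 1))
    (by rintro a ha
        simp only [List.mem_map] at ha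
        obtain ⟨b, hb, rfl⟩ := ha
        have := hlet b (List.drop_subset _ _ hb)
        omega)
  have e1 : traj (n + 2) (i.take (i.length - s) ++ descWord (n + 1)) = 1 := by
    rw [traj_append, hku.2.1, descWord_eq, hblock.2.1]
    omega
  unfold extD
  constructor
  · rw [ctr_append, ctr_append, hku.1, hku.2.1, descWord_eq, hblock.1, ← descWord_eq, e1,
      hsv.1, List.append_nil, map_add_sub, List.take_append_drop]
  · rw [blw_append, blw_append, hku.2.2, hku.2.1, descWord_eq, hblock.2.2, ← descWord_eq, e1,
      hsv.2.2]
    simp only [List.length_map, List.length_drop]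
    omega

lemma extA_ctr {n : ℕ} {i : List ℕ} (hlet : ∀ a ∈ i, 1 ≤ a ∧ a ≤ n) {s : ℕ}
    (hs : s ≤ i.length) :
    ctr 1 (extA n s i) = i ∧ blw 1 (extA n s i) = i.length - s := by
  have hku := ctr_sub (W := 1) (x := (i.take (i.length - s)).map (· + 1))
    (by rintro a ha
        simp only [List.mem_map] at ha
        obtain ⟨b, hb, rfl⟩ := ha
        have := hlet b (List.take_subset _ _ hb)
        omega)
  have hblock := ctr_ascRun 1 (n + 1) (le_refl _)
  have hsv := ctr_keep (W := n + 2) (x := i.drop (i.length - s))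
    (fun a ha => by have := hlet a (List.drop_subset _ _ ha); omega)
  have e1 : traj 1 ((i.take (i.length - s)).map (· + 1) ++ ascWord (n + 1)) = n + 2 := by
    rw [traj_append, hku.2.1, ascWord_eq, hblock.2.1]
    omega
  unfold extA
  constructor
  · rw [ctr_append, ctr_append, hku.1, hku.2.1, ascWord_eq, hblock.1, ← ascWord_eq, e1,
      hsv.1, map_add_sub]
    simpa using List.take_append_drop (i.length - s) i
  · rw [blw_append, blw_append, hku.2.2, hku.2.1, ascWord_eq, hblock.2.2, ← ascWord_eq, e1]
    simp only [List.length_map, List.length_take]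
    omega

lemma extD_dec {n : ℕ} (s : ℕ) (i : List ℕ) :
    TwoMoveEquiv (extD n s i)
      (i.take (i.length - s) ++ descWord (n + 1) ++ (i.drop (i.length - s)).map (· + 1)) := by
  unfold extD
  exact TwoMoveEquiv.refl _

lemma extA_dec {n : ℕ} (s : ℕ) (i : List ℕ) :
    TwoMoveEquiv (extA n s i)
      ((i.take (i.length - s)).map (· + 1) ++ ascWord (n + 1) ++ i.drop (i.length - s)) := by
  unfold extA
  exact TwoMoveEquiv.refl _

lemma extD_ind {n : ℕ} {i : List ℕ} (hi : IsReduced n i) {s : ℕ} (hs : s ≤ Dim n) :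
    indD (n + 1) (extD n s i) = s := by
  have h := indD_char (m := n + 1) (by omega) (extD_reduced hi hs) (extD_dec s i)
  rw [h]
  simp only [List.length_map, List.length_drop]
  have := hi.1
  unfold Dim at hs
  omega

lemma extA_ind {n : ℕ} {i : List ℕ} (hi : IsReduced n i) {s : ℕ} (hs : s ≤ Dim n) :
    indA (n + 1) (extA n s i) = s := by
  have h := indA_char (m := n + 1) (by omega) (extA_reduced hi hs) (extA_dec s i)
  rw [h]
  simp only [List.length_drop]
  have := hi.1
  unfold Dim at hs
  omega

/-- contractions and extensions.
For `• ∈ {A, D}`: (a) for `i ∈ Σ_{n+1}` and `0 ≤ s ≤ N`, the word `E_•(s)(i)` is a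
reduced word in `Σ_{n+2}` with `C_•(E_•(s)(i)) ∼ i` and `ind_•(E_•(s)(i)) = s`;
(b) for `i ∈ Σ_{n+2}`, `E_•(ind_•(i))(C_•(i)) ∼ i`.  In particular
`i ↦ (C_•(i), ind_•(i))` is surjective onto `Σ_{n+1} × {0,…,N}`, `E_•` is a section
of it, and the composition of `E_•` with the quotient to 2-move classes is surjective. -/
theorem statement3 (n : ℕ) (hn : 1 ≤ n) :
    (∀ i : List ℕ, IsReduced n i → ∀ s, s ≤ Dim n →
      (IsReduced (n + 1) (extD n s i) ∧ indD (n + 1) (extD n s i) = s ∧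
        ∀ j, IsContractionD (n + 1) (extD n s i) j → TwoMoveEquiv j i) ∧
      (IsReduced (n + 1) (extA n s i) ∧ indA (n + 1) (extA n s i) = s ∧
        ∀ j, IsContractionA (n + 1) (extA n s i) j → TwoMoveEquiv j i)) ∧
    (∀ i : List ℕ, IsReduced (n + 1) i →
      (∀ j, IsContractionD (n + 1) i j → TwoMoveEquiv (extD n (indD (n + 1) i) j) i) ∧
      (∀ j, IsContractionA (n + 1) i j → TwoMoveEquiv (extA n (indA (n + 1) i) j) i)) ∧
    (∀ i' : List ℕ, IsReduced n i' → ∀ s, s ≤ Dim n →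
      (∃ i, IsReduced (n + 1) i ∧ indD (n + 1) i = s ∧ IsContractionD (n + 1) i i') ∧
      (∃ i, IsReduced (n + 1) i ∧ indA (n + 1) i = s ∧ IsContractionA (n + 1) i i')) ∧
    (∀ i : List ℕ, IsReduced (n + 1) i →
      (∃ i₀ s, IsReduced n i₀ ∧ s ≤ Dim n ∧ TwoMoveEquiv (extD n s i₀) i) ∧
      (∃ i₀ s, IsReduced n i₀ ∧ s ≤ Dim n ∧ TwoMoveEquiv (extA n s i₀) i)) := by
  have hm : 1 ≤ n + 1 := by omega
  have contrD : ∀ i : List ℕ, IsReduced n i → ∀ s, s ≤ Dim n →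
      ∀ j, IsContractionD (n + 1) (extD n s i) j → TwoMoveEquiv j i := by
    intro i hi s hs j hj
    obtain ⟨u', v', heq, rfl⟩ := hj
    have hD := extD_reduced hi hs
    have hctr := extD_ctr (s := s) hi.2.1 (by rw [hi.1]; exact hs)
    have hred' : IsReduced (n + 1) (u' ++ descWord (n + 1) ++ v') := heq.isReduced hD
    have h1 := (ctrD_decomp hm hred').1
    have h2 := (ctr_equiv heq (n + 2)).1
    rw [hctr.1, h1] at h2
    exact h2.symm
  have contrA : ∀ i : List ℕ, IsReduced n i → ∀ s, s ≤ Dim n →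
      ∀ j, IsContractionA (n + 1) (extA n s i) j → TwoMoveEquiv j i := by
    intro i hi s hs j hj
    obtain ⟨u', v', heq, rfl⟩ := hj
    have hA := extA_reduced hi hs
    have hctr := extA_ctr (s := s) hi.2.1 (by rw [hi.1]; exact hs)
    have hred' : IsReduced (n + 1) (u' ++ ascWord (n + 1) ++ v') := heq.isReduced hA
    have h1 := (ctrA_decomp hm hred').1
    have h2 := (ctr_equiv heq 1).1
    rw [hctr.1, h1] at h2
    exact h2.symm
  refine ⟨?_, ?_, ?_, ?_⟩
  · -- part (a) for extensions
    intro i hi s hs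
    exact ⟨⟨extD_reduced hi hs, extD_ind hi hs, contrD i hi s hs⟩,
      ⟨extA_reduced hi hs, extA_ind hi hs, contrA i hi s hs⟩⟩
  · -- part (b)
    intro i hi
    constructor
    · rintro j ⟨u, v, heq, rfl⟩
      have hred' := heq.isReduced hi
      have hstr := structD hm hred'
      have hind : indD (n + 1) i = v.length := indD_char hm hi heq
      rw [hind, extD_reassemble (fun a ha => by have := hstr.2.1 a ha; omega)]
      exact heq.symm
    · rintro j ⟨u, v, heq, rfl⟩
      have hred' := heq.isReduced hi
      have hstr := structA hm hred'
      have hind : indA (n + 1) i = v.length := indA_char hm hi heq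
      rw [hind, extA_reassemble (fun a ha => by have := hstr.1 a ha; omega)]
      exact heq.symm
  · -- part (c) : sections
    intro i' hi' s hs
    constructor
    · refine ⟨extD n s i', extD_reduced hi' hs, extD_ind hi' hs, ?_⟩
      refine ⟨i'.take (i'.length - s), (i'.drop (i'.length - s)).map (· + 1), extD_dec s i', ?_⟩
      rw [map_add_sub, List.take_append_drop]
    · refine ⟨extA n s i', extA_reduced hi' hs, extA_ind hi' hs, ?_⟩
      refine ⟨(i'.take (i'.length - s)).map (· + 1), i'.drop (i'.length - s), extA_dec s i', ?_⟩
      rw [map_add_sub, List.take_append_drop]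
  · -- part (d) : surjectivity
    intro i hi
    have hdim := dim_succ n
    unfold Dim at hdim
    constructor
    · obtain ⟨u, v, heq⟩ := gatherD hm hi
      have hred' := heq.isReduced hi
      have hstr := structD hm hred'
      have hlen : u.length + (n + 1) + v.length = (n + 1) * (n + 1 + 1) / 2 := by
        have := hred'.1
        simp only [List.length_append, length_descWord] at this
        omega
      have hv1 : (v.map (· - 1)).map (· + 1) = v :=
        map_sub_add (fun a ha => by have := hstr.2.1 a ha; omega)
      have hlen2 : u.length + v.length = n * (n + 1) / 2 := by omega
      refine ⟨u ++ v.map (· - 1), v.length, ⟨?_, ?_, ?_⟩, by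
          show v.length ≤ n * (n + 1) / 2; omega, ?_⟩
      · simp only [List.length_append, List.length_map]
        omega
      · intro a ha
        rcases List.mem_append.1 ha with h1 | h1
        · have := hstr.1 a h1; omega
        · obtain ⟨b, hb, rfl⟩ := List.mem_map.1 h1
          have := hstr.2.1 b hb
          omega
      · have hprod := hred'.2.2
        rw [wordProd_append, wordProd_append] at hprod
        have hshift := shiftD (m := n + 1) (x := v.map (· - 1))
          (fun a ha => by
            obtain ⟨b, hb, rfl⟩ := List.mem_map.1 ha
            have := hstr.2.1 b hb
            omega)
        rw [hv1] at hshift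
        rw [mul_assoc, hshift, ← mul_assoc] at hprod
        rw [longest_succ_D n] at hprod
        have := mul_right_cancel hprod
        rw [wordProd_append, this]
      · rw [extD_reassemble (fun a ha => by have := hstr.2.1 a ha; omega)]
        exact heq.symm
    · obtain ⟨u, v, heq⟩ := gatherA hm hi
      have hred' := heq.isReduced hi
      have hstr := structA hm hred'
      have hlen : u.length + (n + 1) + v.length = (n + 1) * (n + 1 + 1) / 2 := by
        have := hred'.1
        simp only [List.length_append, length_ascWord] at this
        omega
      have hu1 : (u.map (· - 1)).map (· + 1) = u :=
        map_sub_add (fun a ha => by have := hstr.1 a ha; omega)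
      have hlen2 : u.length + v.length = n * (n + 1) / 2 := by omega
      refine ⟨u.map (· - 1) ++ v, v.length, ⟨?_, ?_, ?_⟩, by
          show v.length ≤ n * (n + 1) / 2; omega, ?_⟩
      · simp only [List.length_append, List.length_map]
        omega
      · intro a ha
        rcases List.mem_append.1 ha with h1 | h1
        · obtain ⟨b, hb, rfl⟩ := List.mem_map.1 h1
          have := hstr.1 b hb
          omega
        · have := hstr.2.1 a h1; omega
      · have hprod := hred'.2.2
        rw [wordProd_append, wordProd_append] at hprod
        have hshift := shiftA (m := n + 1) (x := u.map (· - 1))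
          (fun a ha => by
            obtain ⟨b, hb, rfl⟩ := List.mem_map.1 ha
            have := hstr.1 b hb
            omega)
        rw [hu1] at hshift
        rw [hshift, mul_assoc] at hprod
        rw [longest_succ_A n] at hprod
        have := mul_left_cancel hprod
        rw [wordProd_append, this]
      · rw [extA_reassemble (fun a ha => by have := hstr.1 a ha; omega)]
        exact heq.symm

end StringPolytope
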